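/- arXiv:1110.2708 — 4 statements merged into one kernel-verified Lean document; each statement's English description precedes it below -/
import Mathlib

section
/- Let Γ be a finite simplicial graph that is not complete and has more than one vertex, and suppose Γ contains no induced cycle of length 4 or more (i.e., Γ is chordal). Then Γ can be written as the union of two proper induced subgraphs Γ₁ and Γ₂ whose intersection Γ₁₂ is either a complete graph or empty. -/
variable {V : Type*}

open scoped commutatorElement

def graphProductRels (Γ : SimpleGraph V) (G : V → Type*) [∀ v, Group (G v)] :
    Set (Monoid.CoprodI G) :=
  {x | ∃ (u v : V) (_ : Γ.Adj u v) (a : G u) (b : G v),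
    x = ⁅Monoid.CoprodI.of a, Monoid.CoprodI.of b⁆}

def GraphProduct (Γ : SimpleGraph V) (G : V → Type*) [∀ v, Group (G v)] : Type _ :=
  Monoid.CoprodI G ⧸ Subgroup.normalClosure (graphProductRels Γ G)

instance (Γ : SimpleGraph V) (G : V → Type*) [∀ v, Group (G v)] :
    Group (GraphProduct Γ G) :=
  QuotientGroup.Quotient.group _

/-- The canonical map from a vertex group into the graph product. -/
def GraphProduct.of (Γ : SimpleGraph V) (G : V → Type*) [∀ v, Group (G v)] {v : V} :
    G v →* GraphProduct Γ G :=
  (QuotientGroup.mk' _).comp Monoid.CoprodI.of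

/-- `Γ` has an induced cycle of length `n`: an injective map from `ZMod n` such that
adjacency holds exactly between consecutive elements. -/
def HasInducedCycle (Γ : SimpleGraph V) (n : ℕ) : Prop :=
  ∃ c : ZMod n → V, Function.Injective c ∧
    ∀ i j : ZMod n, Γ.Adj (c i) (c j) ↔ (j = i + 1 ∨ i = j + 1)

/-- A group is right-orderable if it has a linear order invariant under right multiplication. -/
def RightOrderable (G : Type*) [Group G] : Prop :=
  ∃ le : G → G → Prop, IsLinearOrder G le ∧ ∀ a b c : G, le a b → le (a * c) (b * c)

open Relation

private def stepRel (Γ : SimpleGraph V) (S : Set V) (p q : V) : Prop :=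
  Γ.Adj p q ∧ p ∉ S ∧ q ∉ S



private lemma reach_symm {Γ : SimpleGraph V} {S : Set V} {u v : V}
    (h : ReflTransGen (stepRel Γ S) u v) : ReflTransGen (stepRel Γ S) v u :=
  (@ReflTransGen.stdSymm _ _ ⟨fun _ _ ⟨h, h1, h2⟩ => ⟨h.symm, h2, h1⟩⟩).symm _ _ h

private lemma reach_not_mem {Γ : SimpleGraph V} {S : Set V} {u v : V}
    (h : ReflTransGen (stepRel Γ S) u v) (hu : u ∉ S) : v ∉ S := by
  induction h with
  | refl => exact hu
  | tail _ hst ih => exact hst.2.2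

private lemma reach_mono_of_no_nbr {Γ : SimpleGraph V} {S : Set V} {a s : V}
    (hno : ∀ c, ReflTransGen (stepRel Γ S) a c → ¬ Γ.Adj c s) (ha : a ∉ S) :
    ∀ v, ReflTransGen (stepRel Γ (S \ {s})) a v → ReflTransGen (stepRel Γ S) a v := by
  intro v h
  induction h with
  | refl => exact ReflTransGen.refl
  | @tail v w _ hst ih =>
      have hv : v ∉ S := reach_not_mem ih ha
      rcases eq_or_ne w s with rfl | hw
      · exact absurd hst.1 (hno v ih)
      · have hwS : w ∉ S := fun hmem => hst.2.2 ⟨hmem, hw⟩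
        exact ih.tail ⟨hst.1, hv, hwS⟩

private lemma exists_chain {r : V → V → Prop} {u v : V} (h : ReflTransGen r u v) :
    ∃ (m : ℕ) (f : ℕ → V), f 0 = u ∧ f m = v ∧ ∀ i < m, r (f i) (f (i + 1)) := by
  induction h with
  | refl => exact ⟨0, fun _ => u, rfl, rfl, fun i hi => absurd hi (Nat.not_lt_zero i)⟩
  | @tail b c _ hbc ih =>
      obtain ⟨m, f, h0, hm, hstep⟩ := ih
      refine ⟨m + 1, fun t => if t = m + 1 then c else f t, by simp [h0], by simp, ?_⟩
      intro i hi
      rcases Nat.lt_or_ge i m with h' | h'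
      · simpa [Nat.ne_of_lt h', Nat.ne_of_lt (Nat.lt_succ_of_lt h'), Nat.ne_of_lt (Nat.succ_lt_succ h')] using hstep i h'
      · have him : i = m := by omega
        simpa [him, Nat.ne_of_lt (Nat.lt_succ_self m), hm] using hbc

private lemma chain_prefix_reach {r : V → V → Prop} {m : ℕ} {f : ℕ → V}
    (hstep : ∀ i < m, r (f i) (f (i + 1))) : ∀ i ≤ m, ReflTransGen r (f 0) (f i) := by
  intro i hi
  induction i with
  | zero => exact ReflTransGen.refl
  | succ k ih => exact (ih (by omega)).tail (hstep k (by omega))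


private lemma exists_induced_path (Γ : SimpleGraph V) (C : Set V) {x y : V}
    (hne : x ≠ y) (hnadj : ¬ Γ.Adj x y) (hxC : x ∉ C) (hyC : y ∉ C)
    (hex : ∃ (p : ℕ) (f : ℕ → V), 2 ≤ p ∧ f 0 = x ∧ f p = y ∧
      (∀ i, 0 < i → i < p → f i ∈ C) ∧ ∀ i < p, Γ.Adj (f i) (f (i + 1))) :
    ∃ (p : ℕ) (f : ℕ → V), 2 ≤ p ∧ f 0 = x ∧ f p = y ∧
      (∀ i, 0 < i → i < p → f i ∈ C) ∧
      (∀ i j, i ≤ p → j ≤ p → (Γ.Adj (f i) (f j) ↔ (j = i + 1 ∨ i = j + 1))) ∧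
      (∀ i j, i ≤ p → j ≤ p → f i = f j → i = j) := by
  classical
  set Q : ℕ → Prop := fun p => ∃ f : ℕ → V, 2 ≤ p ∧ f 0 = x ∧ f p = y ∧
      (∀ i, 0 < i → i < p → f i ∈ C) ∧ ∀ i < p, Γ.Adj (f i) (f (i + 1)) with hQdef
  have hQ : ∃ p, Q p := by
    obtain ⟨p, f, h1, h2, h3, h4, h5⟩ := hex
    exact ⟨p, f, h1, h2, h3, h4, h5⟩
  obtain ⟨f, hp2, h0, hp, hC, hstep⟩ := Nat.find_spec hQ
  set p := Nat.find hQ with hpdef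
  have short : ∀ i d, 1 ≤ d → i + d + 1 ≤ p → 2 ≤ p - d →
      Γ.Adj (f i) (f (i + d + 1)) → False := by
    intro i d hd hip h2 hadj
    have hQ' : Q (p - d) := by
      refine ⟨fun t => if t ≤ i then f t else f (t + d), h2, by simp [h0], ?_, ?_, ?_⟩
      · have hni : ¬ (p - d ≤ i) := by omega
        simp only [hni, if_false]
        rw [show p - d + d = p by omega]; exact hp
      · intro t ht0 htp
        by_cases hti : t ≤ i
        · simp only [hti, if_true]
          exact hC t ht0 (by omega)
        · simp only [hti, if_false]
          exact hC (t + d) (by omega) (by omega)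
      · intro t ht
        rcases lt_trichotomy t i with h' | rfl | h'
        · have e1 : t ≤ i := le_of_lt h'
          have e2 : t + 1 ≤ i := h'
          simpa [e1, e2] using hstep t (by omega)
        · have e2 : ¬ (t + 1 ≤ t) := by omega
          simp only [le_refl, if_true, e2, if_false]
          rw [show t + 1 + d = t + d + 1 by omega]; exact hadj
        · have e1 : ¬ (t ≤ i) := by omega
          have e2 : ¬ (t + 1 ≤ i) := by omega
          simp only [e1, e2, if_false]
          rw [show t + 1 + d = t + d + 1 by omega]
          exact hstep (t + d) (by omega)
    exact Nat.find_min hQ (by omega) hQ'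
  have hinj' : ∀ i j, i < j → j ≤ p → f i ≠ f j := by
    intro i j hij hj heq
    rcases Nat.eq_zero_or_pos i with rfl | hi0
    · rcases eq_or_lt_of_le hj with rfl | hjp
      · rw [h0, hp] at heq; exact hne heq
      · have hm : f j ∈ C := hC j (by omega) hjp
        rw [← heq, h0] at hm; exact hxC hm
    · rcases eq_or_lt_of_le hj with rfl | hjp
      · have hm : f i ∈ C := hC i hi0 hij
        rw [heq, hp] at hm; exact hyC hm
      · refine short i (j - i) (by omega) (by omega) (by omega) ?_
        rw [show i + (j - i) + 1 = j + 1 by omega, heq]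
        exact hstep j hjp
  have hnochord : ∀ i j, i + 1 < j → j ≤ p → ¬ Γ.Adj (f i) (f j) := by
    intro i j hij hj hadj
    by_cases hend : i = 0 ∧ j = p
    · obtain ⟨rfl, rfl⟩ := hend
      rw [h0, hp] at hadj; exact hnadj hadj
    · refine short i (j - i - 1) (by omega) (by omega) (by omega) ?_
      rw [show i + (j - i - 1) + 1 = j by omega]; exact hadj
  refine ⟨p, f, hp2, h0, hp, hC, ?_, ?_⟩
  · intro i j hi hj
    constructor
    · intro hadj
      rcases lt_trichotomy i j with h | rfl | h
      · left
        by_contra hne2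
        exact hnochord i j (by omega) hj hadj
      · exact absurd hadj (Γ.irrefl)
      · right
        by_contra hne2
        exact hnochord j i (by omega) hi hadj.symm
    · rintro (rfl | rfl)
      · exact hstep i (by omega)
      · exact (hstep j (by omega)).symm
  · intro i j hi hj heq
    rcases lt_trichotomy i j with h | h | h
    · exact absurd heq (hinj' i j h hj)
    · exact h
    · exact absurd heq.symm (hinj' j i h hi)



private lemma zmod_succ_iff {n : ℕ} (hn : 2 ≤ n) (i j : ZMod n) :
    j = i + 1 ↔ (j.val = i.val + 1 ∨ (i.val = n - 1 ∧ j.val = 0)) := by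
  haveI : NeZero n := ⟨by omega⟩
  haveI : Fact (1 < n) := ⟨by omega⟩
  have hvi := ZMod.val_lt i
  have hvj := ZMod.val_lt j
  have hval : (i + 1).val = (i.val + 1) % n := by rw [ZMod.val_add, ZMod.val_one]
  constructor
  · rintro rfl
    rw [hval]
    by_cases h : i.val = n - 1
    · exact Or.inr ⟨h, by rw [h, show n - 1 + 1 = n by omega, Nat.mod_self]⟩
    · exact Or.inl (Nat.mod_eq_of_lt (by omega))
  · intro h
    apply ZMod.val_injective n
    rw [hval]
    rcases h with h | ⟨h1, h2⟩
    · rw [h, Nat.mod_eq_of_lt (by omega)]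
    · rw [h2, h1, show n - 1 + 1 = n by omega, Nat.mod_self]

private lemma cycle_of_two_paths (Γ : SimpleGraph V) (Ca Cb : Set V) {x y : V}
    (_hxa : x ∉ Ca) (_hya : y ∉ Ca) (hxb : x ∉ Cb) (hyb : y ∉ Cb)
    (hdisj : ∀ u, u ∈ Ca → u ∉ Cb)
    (hnoadj : ∀ u w, u ∈ Ca → w ∈ Cb → ¬ Γ.Adj u w)
    {p q : ℕ} {f g : ℕ → V}
    (hp2 : 2 ≤ p) (hf0 : f 0 = x) (hfp : f p = y)
    (hfC : ∀ i, 0 < i → i < p → f i ∈ Ca)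
    (hfiff : ∀ i j, i ≤ p → j ≤ p → (Γ.Adj (f i) (f j) ↔ (j = i + 1 ∨ i = j + 1)))
    (hfinj : ∀ i j, i ≤ p → j ≤ p → f i = f j → i = j)
    (hq2 : 2 ≤ q) (hg0 : g 0 = x) (hgq : g q = y)
    (hgC : ∀ i, 0 < i → i < q → g i ∈ Cb)
    (hgiff : ∀ i j, i ≤ q → j ≤ q → (Γ.Adj (g i) (g j) ↔ (j = i + 1 ∨ i = j + 1)))
    (hginj : ∀ i j, i ≤ q → j ≤ q → g i = g j → i = j) :
    HasInducedCycle Γ (p + q) := by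
  classical
  set n := p + q with hn
  have hn4 : 4 ≤ n := by omega
  haveI : NeZero n := ⟨by omega⟩
  set cc : ℕ → V := fun t => if t ≤ p then f t else g (n - t) with hcc
  -- basic evaluation lemmas
  have ccle : ∀ a, a ≤ p → cc a = f a := by
    intro a ha; simp only [hcc]; rw [if_pos ha]
  have ccgt : ∀ a, p < a → cc a = g (n - a) := by
    intro a ha; simp only [hcc]; rw [if_neg (by omega)]
  -- the ordered adjacency characterization
  have key' : ∀ a b, a < n → b < n → a ≤ b →
      (Γ.Adj (cc a) (cc b) ↔
        ((b = a + 1 ∨ (a = n - 1 ∧ b = 0)) ∨ (a = b + 1 ∨ (b = n - 1 ∧ a = 0)))) := by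
    intro a b ha hb hab
    by_cases hbp : b ≤ p
    · -- both on f
      rw [ccle a (by omega), ccle b hbp, hfiff a b (by omega) hbp]
      omega
    · push_neg at hbp
      set b' := n - b with hb'
      have hb'1 : 1 ≤ b' := by omega
      have hb'q : b' ≤ q - 1 := by omega
      rw [ccgt b hbp]
      by_cases hap : a ≤ p
      · -- a on f, b on g
        rcases Nat.eq_zero_or_pos a with rfl | ha0
        · -- cc 0 = x = g 0
          have e0 : cc 0 = g 0 := by rw [ccle 0 (by omega), hf0, hg0]
          rw [e0, hgiff 0 b' (by omega) (by omega)]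
          omega
        · rcases eq_or_lt_of_le hap with rfl | hap'
          · -- cc p = y = g q
            have ep : cc a = g q := by rw [ccle a le_rfl, hfp, hgq]
            rw [ep, hgiff q b' le_rfl (by omega)]
            omega
          · -- interior-interior : no adjacency
            rw [ccle a (by omega)]
            refine iff_of_false (hnoadj _ _ (hfC a ha0 hap') (hgC b' (by omega) (by omega))) (by omega)
      · -- both on g
        push_neg at hap
        set a' := n - a with ha'
        rw [ccgt a hap, hgiff (n - a) b' (by omega) (by omega)]
        omega
  have key : ∀ a b, a < n → b < n →
      (Γ.Adj (cc a) (cc b) ↔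
        ((b = a + 1 ∨ (a = n - 1 ∧ b = 0)) ∨ (a = b + 1 ∨ (b = n - 1 ∧ a = 0)))) := by
    intro a b ha hb
    rcases le_total a b with h | h
    · exact key' a b ha hb h
    · rw [Γ.adj_comm, key' b a hb ha h]
      tauto
  have keyinj : ∀ a b, a < n → b < n → cc a = cc b → a = b := by
    have mixed : ∀ a b, a ≤ p → p < b → b < n → cc a = cc b → False := by
      intro a b hap hbp hb heq
      set b' := n - b with hb'
      have hgb : g b' ∈ Cb := hgC b' (by omega) (by omega)
      rw [ccgt b hbp] at heq
      rcases Nat.eq_zero_or_pos a with rfl | ha0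
      · rw [ccle 0 (by omega), hf0] at heq
        exact hxb (heq ▸ hgb)
      · rcases eq_or_lt_of_le hap with rfl | hap'
        · rw [ccle a le_rfl, hfp] at heq
          exact hyb (heq ▸ hgb)
        · rw [ccle a (by omega)] at heq
          exact hdisj _ (hfC a ha0 hap') (heq ▸ hgb)
    intro a b ha hb heq
    by_cases hap : a ≤ p <;> by_cases hbp : b ≤ p
    · rw [ccle a hap, ccle b hbp] at heq
      exact hfinj a b hap hbp heq
    · exact absurd heq (fun h => mixed a b hap (by omega) hb h)
    · exact absurd heq.symm (fun h => mixed b a hbp (by omega) ha h)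
    · push_neg at hap hbp
      rw [ccgt a hap, ccgt b hbp] at heq
      have := hginj (n - a) (n - b) (by omega) (by omega) heq
      omega
  refine ⟨fun i => cc i.val, ?_, ?_⟩
  · intro i j hij
    apply ZMod.val_injective n
    exact keyinj i.val j.val (ZMod.val_lt i) (ZMod.val_lt j) hij
  · intro i j
    rw [zmod_succ_iff (by omega) i j, zmod_succ_iff (by omega) j i]
    exact key i.val j.val (ZMod.val_lt i) (ZMod.val_lt j)


private lemma path_through_component (Γ : SimpleGraph V) (C : Set V) {x y cx cy : V}
    (hx : Γ.Adj x cx) (hy : Γ.Adj cy y) {m : ℕ} {h : ℕ → V}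
    (h0 : h 0 = cx) (hm : h m = cy)
    (hstep : ∀ i < m, Γ.Adj (h i) (h (i + 1))) (hmem : ∀ i ≤ m, h i ∈ C) :
    ∃ (p : ℕ) (f : ℕ → V), 2 ≤ p ∧ f 0 = x ∧ f p = y ∧
      (∀ i, 0 < i → i < p → f i ∈ C) ∧ ∀ i < p, Γ.Adj (f i) (f (i + 1)) := by
  classical
  refine ⟨m + 2, fun t => if t = 0 then x else if t ≤ m + 1 then h (t - 1) else y,
    by omega, by simp, ?_, ?_, ?_⟩
  · simp only [show ¬(m + 2 = 0) by omega, if_false, show ¬(m + 2 ≤ m + 1) by omega]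
  · intro i hi0 hip
    simp only [show ¬(i = 0) by omega, if_false, show i ≤ m + 1 by omega, if_true]
    exact hmem (i - 1) (by omega)
  · intro i hi
    by_cases h1 : i = 0
    · subst h1
      simp only [if_pos rfl, show ¬((0:ℕ) + 1 = 0) by omega, if_false,
        show (0:ℕ) + 1 ≤ m + 1 by omega, if_true]
      simpa [h0] using hx
    · by_cases h2 : i ≤ m
      · simp only [h1, if_false, show i ≤ m + 1 by omega, if_true,
          show ¬(i + 1 = 0) by omega, show i + 1 ≤ m + 1 by omega]
        have := hstep (i - 1) (by omega)
        rw [show i - 1 + 1 = i by omega] at this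
        rw [show i + 1 - 1 = i by omega]
        exact this
      · have h3 : i = m + 1 := by omega
        subst h3
        simp only [h1, if_false, le_rfl, if_true, show ¬(m + 1 + 1 = 0) by omega,
          show ¬(m + 1 + 1 ≤ m + 1) by omega]
        simpa [hm] using hy


/-- A finite incomplete chordal graph with more than one vertex splits as a union of two
proper induced subgraphs whose intersection is complete or empty. -/
theorem stmt0 {V : Type*} [Fintype V] (Γ : SimpleGraph V)
    (hncomplete : ¬ ∀ u v : V, u ≠ v → Γ.Adj u v)
    (hcard : 1 < Fintype.card V)
    (hchordal : ∀ n : ℕ, 4 ≤ n → ¬ HasInducedCycle Γ n) :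
    ∃ A B : Set V, A ∪ B = Set.univ ∧ A ≠ Set.univ ∧ B ≠ Set.univ ∧
      (∀ u v : V, Γ.Adj u v → (u ∈ A ∧ v ∈ A) ∨ (u ∈ B ∧ v ∈ B)) ∧
      (A ∩ B = ∅ ∨ ∀ u ∈ A ∩ B, ∀ w ∈ A ∩ B, u ≠ w → Γ.Adj u w) := by
  classical
  push_neg at hncomplete
  obtain ⟨a, b, hab, hnadjab⟩ := hncomplete
  set Sep : Finset V → Prop :=
    fun S => a ∉ S ∧ b ∉ S ∧ ¬ ReflTransGen (stepRel Γ ↑S) a b with hSepdef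
  have hSep0 : ∃ k, ∃ S : Finset V, Sep S ∧ S.card = k := by
    refine ⟨_, Finset.univ \ {a, b}, ⟨by simp, by simp, ?_⟩, rfl⟩
    intro hr
    rcases hr.cases_head with heq | ⟨c, hc, _⟩
    · exact hab heq
    · have hcm : c = a ∨ c = b := by
        have h2 := hc.2.2
        by_contra hcon
        push_neg at hcon
        exact h2 (by simp [hcon.1, hcon.2])
      rcases hcm with rfl | rfl
      · exact Γ.irrefl hc.1
      · exact hnadjab hc.1
  obtain ⟨S, hSsep, hScard⟩ := Nat.find_spec hSep0
  obtain ⟨haS, hbS, hnreach⟩ := hSsep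
  have hmin : ∀ S' : Finset V, S'.card < S.card → ¬ Sep S' := by
    intro S' hlt hsep'
    exact Nat.find_min hSep0 (by omega) ⟨S', hsep', rfl⟩
  have haS' : a ∉ (↑S : Set V) := by simpa using haS
  have hbS' : b ∉ (↑S : Set V) := by simpa using hbS
  set Ca : Set V := {v | ReflTransGen (stepRel Γ ↑S) a v} with hCadef
  set Cb : Set V := {v | ReflTransGen (stepRel Γ ↑S) b v} with hCbdef
  have hCaS : ∀ v ∈ Ca, v ∉ (↑S : Set V) := fun v hv => reach_not_mem hv haS'
  have hCbS : ∀ v ∈ Cb, v ∉ (↑S : Set V) := fun v hv => reach_not_mem hv hbS'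
  have hdisj : ∀ v, v ∈ Ca → v ∉ Cb := fun v hva hvb =>
    hnreach (ReflTransGen.trans hva (reach_symm hvb))
  have hnoadj : ∀ u w, u ∈ Ca → w ∈ Cb → ¬ Γ.Adj u w := by
    intro u w hu hw hadj
    exact hnreach (ReflTransGen.trans
      (ReflTransGen.tail hu ⟨hadj, hCaS u hu, hCbS w hw⟩) (reach_symm hw))
  have hbCa : b ∉ Ca := fun h => hnreach h
  have hnbr : ∀ s ∈ S, (∃ c ∈ Ca, Γ.Adj c s) ∧ (∃ c ∈ Cb, Γ.Adj c s) := by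
    intro s hs
    have hr' : ReflTransGen (stepRel Γ (↑S \ {s})) a b := by
      by_contra hr
      refine hmin (S.erase s) ?_
        ⟨fun h => haS (Finset.mem_of_mem_erase h),
         fun h => hbS (Finset.mem_of_mem_erase h), ?_⟩
      · rw [Finset.card_erase_of_mem hs]
        have := Finset.card_pos.mpr ⟨s, hs⟩
        omega
      · rw [Finset.coe_erase]
        exact hr
    constructor
    · by_contra h
      push_neg at h
      exact hnreach (reach_mono_of_no_nbr (fun c hc => h c hc) haS' b hr')
    · by_contra h
      push_neg at h
      exact hnreach (reach_symm
        (reach_mono_of_no_nbr (fun c hc => h c hc) hbS' a (reach_symm hr')))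
  refine ⟨Ca ∪ ↑S, (Ca)ᶜ, ?_, ?_, ?_, ?_, Or.inr ?_⟩
  · ext v
    simp only [Set.mem_union, Set.mem_compl_iff, Set.mem_univ, iff_true]
    by_cases hv : v ∈ Ca
    · exact Or.inl (Or.inl hv)
    · exact Or.inr hv
  · intro h
    have hb2 : b ∈ Ca ∪ (↑S : Set V) := h.symm ▸ Set.mem_univ b
    rcases hb2 with h' | h'
    · exact hbCa h'
    · exact hbS' h'
  · intro h
    have ha2 : a ∈ (Ca)ᶜ := h.symm ▸ Set.mem_univ a
    exact ha2 ReflTransGen.refl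
  · intro u v hadj
    by_cases hu : u ∈ Ca
    · refine Or.inl ⟨Or.inl hu, ?_⟩
      by_cases hv : v ∈ (↑S : Set V)
      · exact Or.inr hv
      · exact Or.inl (ReflTransGen.tail hu ⟨hadj, hCaS u hu, hv⟩)
    · by_cases hv : v ∈ Ca
      · refine Or.inl ⟨?_, Or.inl hv⟩
        by_cases hus : u ∈ (↑S : Set V)
        · exact Or.inr hus
        · exact Or.inl (ReflTransGen.tail hv ⟨hadj.symm, hCaS v hv, hus⟩)
      · exact Or.inr ⟨hu, hv⟩
  · intro u hu w hw hne
    obtain ⟨hu1, hu2⟩ := hu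
    obtain ⟨hw1, hw2⟩ := hw
    have huS : u ∈ (↑S : Set V) := by
      rcases hu1 with h | h
      · exact absurd h hu2
      · exact h
    have hwS : w ∈ (↑S : Set V) := by
      rcases hw1 with h | h
      · exact absurd h hw2
      · exact h
    by_contra hnadj
    have huCa : u ∉ Ca := fun hh => hCaS u hh huS
    have hwCa : w ∉ Ca := fun hh => hCaS w hh hwS
    have huCb : u ∉ Cb := fun hh => hCbS u hh huS
    have hwCb : w ∉ Cb := fun hh => hCbS w hh hwS
    obtain ⟨⟨cu, hcu, hcua⟩, ⟨du, hdu, hdua⟩⟩ := hnbr u (Finset.mem_coe.mp huS)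
    obtain ⟨⟨cw, hcw, hcwa⟩, ⟨dw, hdw, hdwa⟩⟩ := hnbr w (Finset.mem_coe.mp hwS)
    -- path through Ca
    have hexa : ∃ (p : ℕ) (f : ℕ → V), 2 ≤ p ∧ f 0 = u ∧ f p = w ∧
        (∀ i, 0 < i → i < p → f i ∈ Ca) ∧ ∀ i < p, Γ.Adj (f i) (f (i + 1)) := by
      obtain ⟨m, h, hh0, hhm, hhstep⟩ := exists_chain (ReflTransGen.trans (reach_symm hcu) hcw)
      have hhadj : ∀ i < m, Γ.Adj (h i) (h (i + 1)) := fun i hi => (hhstep i hi).1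
      have hhmem : ∀ i ≤ m, h i ∈ Ca := by
        intro i hi
        have := chain_prefix_reach hhstep i hi
        rw [hh0] at this
        exact ReflTransGen.trans hcu this
      exact path_through_component Γ Ca hcua.symm hcwa hh0 hhm hhadj hhmem
    have hexb : ∃ (p : ℕ) (f : ℕ → V), 2 ≤ p ∧ f 0 = u ∧ f p = w ∧
        (∀ i, 0 < i → i < p → f i ∈ Cb) ∧ ∀ i < p, Γ.Adj (f i) (f (i + 1)) := by
      obtain ⟨m, h, hh0, hhm, hhstep⟩ := exists_chain (ReflTransGen.trans (reach_symm hdu) hdw)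
      have hhadj : ∀ i < m, Γ.Adj (h i) (h (i + 1)) := fun i hi => (hhstep i hi).1
      have hhmem : ∀ i ≤ m, h i ∈ Cb := by
        intro i hi
        have := chain_prefix_reach hhstep i hi
        rw [hh0] at this
        exact ReflTransGen.trans hdu this
      exact path_through_component Γ Cb hdua.symm hdwa hh0 hhm hhadj hhmem
    obtain ⟨p, f, hp2, hf0, hfp, hfC, hfiff, hfinj⟩ :=
      exists_induced_path Γ Ca hne hnadj huCa hwCa hexa
    obtain ⟨q, g, hq2, hg0, hgq, hgC, hgiff, hginj⟩ :=
      exists_induced_path Γ Cb hne hnadj huCb hwCb hexb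
    exact hchordal (p + q) (by omega)
      (cycle_of_two_paths Γ Ca Cb huCa hwCa huCb hwCb hdisj hnoadj
        hp2 hf0 hfp hfC hfiff hfinj hq2 hg0 hgq hgC hgiff hginj)
end

section
/- Let Γ be a (possibly infinite) simplicial graph with finite chromatic number m, and let G = 𝒢(Γ; G_v) be a graph product of groups over Γ. Then there is a subnormal series G = G₀ ⊳ G₁ ⊳ ⋯ ⊳ G_m = 1 such that each factor G_{i−1}/G_i is isomorphic to a free product of copies of vertex groups G_v. -/
variable {V : Type*}

open scoped commutatorElement

universe u

namespace GPAux

open Monoid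

variable {V : Type u} {Γ : SimpleGraph V} {G : V → Type u} [∀ v, Group (G v)]

theorem of_commute {u v : V} (h : Γ.Adj u v) (a : G u) (b : G v) :
    Commute (GraphProduct.of Γ G a) (GraphProduct.of Γ G b) := by
  rw [← commutatorElement_eq_one_iff_commute]
  show (QuotientGroup.mk' (Subgroup.normalClosure (graphProductRels Γ G)))
      ⁅Monoid.CoprodI.of a, Monoid.CoprodI.of b⁆ = 1
  exact (QuotientGroup.eq_one_iff _).2
    (Subgroup.subset_normalClosure ⟨u, v, h, a, b, rfl⟩)

def lift {H : Type*} [Group H] (φ : ∀ v, G v →* H)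
    (hφ : ∀ u v, Γ.Adj u v → ∀ a b, Commute (φ u a) (φ v b)) :
    GraphProduct Γ G →* H :=
  QuotientGroup.lift _ (Monoid.CoprodI.lift φ) (by
    intro x hx
    refine Subgroup.normalClosure_le_normal ?_ hx
    rintro y ⟨u, w, huw, a, b, rfl⟩
    simp only [SetLike.mem_coe, MonoidHom.mem_ker, map_commutatorElement,
      Monoid.CoprodI.lift_of]
    exact commutatorElement_eq_one_iff_commute.2 (hφ u w huw a b))

@[simp] theorem lift_of {H : Type*} [Group H] (φ : ∀ v, G v →* H) (hφ) {v : V} (a : G v) :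
    lift φ hφ (GraphProduct.of Γ G a) = φ v a := rfl

theorem hom_ext {H : Type*} [Group H] {f g : GraphProduct Γ G →* H}
    (h : ∀ (v : V) (a : G v), f (GraphProduct.of Γ G a) = g (GraphProduct.of Γ G a)) :
    f = g := by
  refine QuotientGroup.monoidHom_ext _ (Monoid.CoprodI.ext_hom _ _ fun v => ?_)
  ext a
  exact h v a

end GPAux

namespace GPAux

variable {V : Type u} {Γ : SimpleGraph V} {G : V → Type u} [∀ v, Group (G v)]

open scoped Classical

variable (Γ G) in
abbrev GS (S : Set V) : Type u := GraphProduct (Γ.induce S) (fun x : S => G (↑x : V))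

/-- The canonical retraction killing the vertices outside `S`. -/
noncomputable def toSub (S : Set V) : GraphProduct Γ G →* GS Γ G S :=
  lift (fun v => if h : v ∈ S then GraphProduct.of (Γ.induce S) (fun x : S => G (↑x : V)) (v := ⟨v, h⟩) else 1)
    (by
      intro u w huw a b
      beta_reduce
      by_cases hu : u ∈ S <;> by_cases hw : w ∈ S
      · rw [dif_pos hu, dif_pos hw]
        exact of_commute (Γ := Γ.induce S) (G := fun x : S => G (↑x : V))
          (u := ⟨u, hu⟩) (v := ⟨w, hw⟩) (by exact huw) a b
      · rw [dif_neg hw]; exact Commute.one_right _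
      · rw [dif_neg hu]; exact Commute.one_left _
      · rw [dif_neg hu]; exact Commute.one_left _)

theorem toSub_of_mem {S : Set V} {v : V} (h : v ∈ S) (a : G v) :
    toSub S (GraphProduct.of Γ G a) = GraphProduct.of (Γ.induce S) (fun x : S => G (↑x : V)) (v := ⟨v, h⟩) a := by
  simp [toSub, h]

theorem toSub_of_not_mem {S : Set V} {v : V} (h : v ∉ S) (a : G v) :
    toSub S (GraphProduct.of Γ G a) = 1 := by
  simp [toSub, h]

/-- The retraction between graph products over nested vertex sets. -/
noncomputable def down {S S' : Set V} (hss : S ⊆ S') : GS Γ G S' →* GS Γ G S :=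
  lift (fun x => if h : (↑x : V) ∈ S then GraphProduct.of (Γ.induce S) (fun y : S => G (↑y : V)) (v := ⟨↑x, h⟩) else 1)
    (by
      intro u w huw a b
      beta_reduce
      by_cases hu : (↑u : V) ∈ S <;> by_cases hw : (↑w : V) ∈ S
      · rw [dif_pos hu, dif_pos hw]
        exact of_commute (Γ := Γ.induce S) (G := fun y : S => G (↑y : V))
          (u := ⟨↑u, hu⟩) (v := ⟨↑w, hw⟩) (by exact huw) a b
      · rw [dif_neg hw]; exact Commute.one_right _
      · rw [dif_neg hu]; exact Commute.one_left _
      · rw [dif_neg hu]; exact Commute.one_left _)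

/-- The canonical (injective) map upwards between graph products over nested vertex sets. -/
noncomputable def up {S S' : Set V} (hss : S ⊆ S') : GS Γ G S →* GS Γ G S' :=
  lift (fun x => GraphProduct.of (Γ.induce S') (fun y : S' => G (↑y : V)) (v := ⟨↑x, hss x.2⟩))
    (fun u w huw a b => of_commute (Γ := Γ.induce S') (G := fun y : S' => G (↑y : V))
      (u := ⟨↑u, hss u.2⟩) (v := ⟨↑w, hss w.2⟩) (by exact huw) a b)

theorem up_of {S S' : Set V} (hss : S ⊆ S') (x : S) (a : G (↑x : V)) :
    up (Γ := Γ) (G := G) hss (GraphProduct.of _ _ a)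
      = GraphProduct.of (Γ.induce S') (fun y : S' => G (↑y : V)) (v := ⟨↑x, hss x.2⟩) a := rfl

/-- The canonical map from a graph product over a subset to the full graph product. -/
noncomputable def toFull (S : Set V) : GS Γ G S →* GraphProduct Γ G :=
  lift (fun x => GraphProduct.of Γ G (v := ↑x))
    (fun u w huw a b => of_commute (Γ := Γ) (G := G) (by exact huw) a b)

theorem down_comp_toSub {S S' : Set V} (hss : S ⊆ S') :
    (down (Γ := Γ) (G := G) hss).comp (toSub S') = toSub S := by
  refine hom_ext fun v a => ?_
  by_cases hv : v ∈ S'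
  · rw [MonoidHom.comp_apply, toSub_of_mem hv]
    by_cases hvS : v ∈ S
    · rw [toSub_of_mem hvS]; simp [down, hvS]
    · rw [toSub_of_not_mem hvS]; simp [down, hvS]
  · rw [MonoidHom.comp_apply, toSub_of_not_mem hv, map_one,
      toSub_of_not_mem (fun h => hv (hss h))]

theorem toSub_comp_toFull {S : Set V} :
    (toSub (Γ := Γ) (G := G) S).comp (toFull S) = MonoidHom.id _ := by
  refine hom_ext fun x a => ?_
  rw [MonoidHom.comp_apply, MonoidHom.id_apply]
  show toSub S (GraphProduct.of Γ G (v := ↑x) a) = _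
  rw [toSub_of_mem x.2]

theorem toFull_comp_toSub {S : Set V} (hS : ∀ v, v ∈ S) :
    (toFull (Γ := Γ) (G := G) S).comp (toSub S) = MonoidHom.id _ := by
  refine hom_ext fun v a => ?_
  rw [MonoidHom.comp_apply, MonoidHom.id_apply, toSub_of_mem (hS v)]
  rfl

theorem gp_subsingleton [IsEmpty V] : ∀ x : GraphProduct Γ G, x = 1 := by
  have h1 : (MonoidHom.id (GraphProduct Γ G)) = 1 :=
    hom_ext fun v => isEmptyElim v
  intro x
  calc x = MonoidHom.id _ x := rfl
  _ = (1 : GraphProduct Γ G →* GraphProduct Γ G) x := by rw [h1]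
  _ = 1 := rfl

end GPAux

namespace GPAux

open Monoid SemidirectProduct
open scoped Classical

variable {V : Type u}
variable (Γ : SimpleGraph V) (G : V → Type u) [∀ v, Group (G v)] (S S' I : Set V)

/-- The "link subgroup" of a vertex `v ∈ I` inside the graph product over `S`. -/
def L (v : ↥I) : Subgroup (GS Γ G S) :=
  Subgroup.closure {x | ∃ (u : ↥S) (_ : Γ.Adj ↑u ↑v) (g : G (↑u : V)),
    x = GraphProduct.of (Γ.induce S) (fun y : S => G (↑y : V)) (v := u) g}

/-- Index type: pairs of a vertex of `I` and a coset of its link subgroup. -/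
abbrev Idx : Type u := Σ v : ↥I, GS Γ G S ⧸ L Γ G S I v

abbrev fIdx : Idx Γ G S I → V := fun j => ↑j.1

abbrev K : Type u := Monoid.CoprodI fun j : Idx Γ G S I => G (fIdx Γ G S I j)

/-- Translation action of the graph product over `S` on `K`. -/
def θ (a : GS Γ G S) : K Γ G S I →* K Γ G S I :=
  Monoid.CoprodI.lift fun j =>
    (Monoid.CoprodI.of (M := fun j : Idx Γ G S I => G (fIdx Γ G S I j)) (i := ⟨j.1, a • j.2⟩))

theorem θ_of (a : GS Γ G S) (j : Idx Γ G S I) (g : G (fIdx Γ G S I j)) :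
    θ Γ G S I a (Monoid.CoprodI.of (i := j) g)
      = Monoid.CoprodI.of (M := fun j : Idx Γ G S I => G (fIdx Γ G S I j))
          (i := ⟨j.1, a • j.2⟩) g :=
  Monoid.CoprodI.lift_of (M := fun j : Idx Γ G S I => G (fIdx Γ G S I j)) _ (i := j) g

theorem θ_mul (a b : GS Γ G S) :
    θ Γ G S I (a * b) = (θ Γ G S I a).comp (θ Γ G S I b) := by
  refine Monoid.CoprodI.ext_hom _ _ fun j => ?_
  ext g
  show θ Γ G S I (a * b) (Monoid.CoprodI.of (i := j) g)
    = θ Γ G S I a (θ Γ G S I b (Monoid.CoprodI.of (i := j) g))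
  rw [θ_of, θ_of, θ_of, mul_smul]

theorem θ_one : θ Γ G S I (1 : GS Γ G S) = MonoidHom.id _ := by
  refine Monoid.CoprodI.ext_hom _ _ fun j => ?_
  ext g
  show θ Γ G S I 1 (Monoid.CoprodI.of (i := j) g) = Monoid.CoprodI.of (i := j) g
  rw [θ_of, one_smul]

/-- The action of the graph product over `S` on `K` as a homomorphism to `MulAut`. -/
def act : GS Γ G S →* MulAut (K Γ G S I) where
  toFun a :=
    { toFun := θ Γ G S I a
      invFun := θ Γ G S I a⁻¹
      left_inv := fun x => by
        rw [← MonoidHom.comp_apply, ← θ_mul, inv_mul_cancel, θ_one, MonoidHom.id_apply]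
      right_inv := fun x => by
        rw [← MonoidHom.comp_apply, ← θ_mul, mul_inv_cancel, θ_one, MonoidHom.id_apply]
      map_mul' := map_mul _ }
  map_one' := by
    refine MulEquiv.ext fun x => ?_
    show θ Γ G S I 1 x = x
    rw [θ_one, MonoidHom.id_apply]
  map_mul' := fun a b => by
    refine MulEquiv.ext fun x => ?_
    show θ Γ G S I (a * b) x = θ Γ G S I a (θ Γ G S I b x)
    rw [θ_mul, MonoidHom.comp_apply]


theorem act_apply (a : GS Γ G S) (k : K Γ G S I) :
    (act Γ G S I a) k = θ Γ G S I a k := rfl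

theorem commute_inr_inl {A' K' : Type*} [Group A'] [Group K'] {φ : A' →* MulAut K'}
    (g : A') (n : K') (h : φ g n = n) :
    Commute (SemidirectProduct.inr g : K' ⋊[φ] A') (SemidirectProduct.inl n) := by
  have h1 := SemidirectProduct.inl_aut (φ := φ) g n
  rw [h] at h1
  show _ * _ = _ * _
  calc SemidirectProduct.inr g * SemidirectProduct.inl n
      = (SemidirectProduct.inr g * SemidirectProduct.inl n * SemidirectProduct.inr g⁻¹)
          * SemidirectProduct.inr g := by
        rw [mul_assoc, ← map_mul, inv_mul_cancel, map_one, mul_one]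
    _ = SemidirectProduct.inl n * SemidirectProduct.inr g := by rw [← h1]

theorem of_mem_L (v : ↥I) (u : ↥S) (h : Γ.Adj ↑u ↑v) (g : G (↑u : V)) :
    GraphProduct.of (Γ.induce S) (fun y : S => G (↑y : V)) (v := u) g ∈ L Γ G S I v :=
  Subgroup.subset_closure ⟨u, h, g, rfl⟩

theorem smul_mk_one (v : ↥I) {a : GS Γ G S} (ha : a ∈ L Γ G S I v) :
    a • (QuotientGroup.mk 1 : GS Γ G S ⧸ L Γ G S I v) = QuotientGroup.mk 1 := by
  rw [MulAction.Quotient.smul_mk]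
  refine QuotientGroup.eq.mpr ?_
  simpa using inv_mem ha

/-- The map from the graph product over `S'` to the semidirect product. -/
noncomputable def Phi (hSS' : S ⊆ S') (hunion : ∀ v ∈ S', v ∈ S ∨ v ∈ I)
    (hind : ∀ u ∈ I, ∀ v ∈ I, ¬ Γ.Adj u v) :
    GS Γ G S' →* K Γ G S I ⋊[act Γ G S I] GS Γ G S :=
  lift (fun x => if h : (↑x : V) ∈ S then
      SemidirectProduct.inr.comp
        (GraphProduct.of (Γ.induce S) (fun y : S => G (↑y : V)) (v := ⟨↑x, h⟩))
    else
      SemidirectProduct.inl.comp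
        ((Monoid.CoprodI.of (M := fun j : Idx Γ G S I => G (fIdx Γ G S I j))
          (i := ⟨⟨↑x, (hunion ↑x x.2).resolve_left h⟩, QuotientGroup.mk 1⟩))))
    (by
      intro x y hxy a b
      beta_reduce
      by_cases hx : (↑x : V) ∈ S <;> by_cases hy : (↑y : V) ∈ S
      · rw [dif_pos hx, dif_pos hy]
        exact Commute.map (of_commute (Γ := Γ.induce S) (G := fun y : S => G (↑y : V))
          (u := ⟨↑x, hx⟩) (v := ⟨↑y, hy⟩) (by exact hxy) a b) SemidirectProduct.inr
      · rw [dif_pos hx, dif_neg hy]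
        refine commute_inr_inl _ _ ?_
        rw [act_apply, θ_of]
        rw [smul_mk_one Γ G S I ⟨↑y, (hunion ↑y y.2).resolve_left hy⟩
          (of_mem_L Γ G S I ⟨↑y, (hunion ↑y y.2).resolve_left hy⟩ ⟨↑x, hx⟩ (by exact hxy) a)]
      · rw [dif_neg hx, dif_pos hy]
        refine (commute_inr_inl _ _ ?_).symm
        rw [act_apply, θ_of]
        rw [smul_mk_one Γ G S I ⟨↑x, (hunion ↑x x.2).resolve_left hx⟩
          (of_mem_L Γ G S I ⟨↑x, (hunion ↑x x.2).resolve_left hx⟩ ⟨↑y, hy⟩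
            (by exact hxy.symm) b)]
      · exact absurd (by exact hxy) (hind ↑x ((hunion ↑x x.2).resolve_left hx) ↑y
          ((hunion ↑y y.2).resolve_left hy)))

/-- The map from `K` into the graph product over `S'`. -/
noncomputable def psiK (hSS' : S ⊆ S') (hIS' : I ⊆ S') : K Γ G S I →* GS Γ G S' :=
  Monoid.CoprodI.lift fun j =>
    (MulAut.conj (up (Γ := Γ) (G := G) hSS' j.2.out)).toMonoidHom.comp
      (GraphProduct.of (Γ.induce S') (fun y : S' => G (↑y : V)) (v := ⟨↑j.1, hIS' j.1.2⟩))

theorem psiK_of (hSS' : S ⊆ S') (hIS' : I ⊆ S') (j : Idx Γ G S I) (g : G (fIdx Γ G S I j)) :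
    psiK Γ G S S' I hSS' hIS' (Monoid.CoprodI.of (i := j) g)
      = MulAut.conj (up (Γ := Γ) (G := G) hSS' j.2.out)
          (GraphProduct.of (Γ.induce S') (fun y : S' => G (↑y : V)) (v := ⟨↑j.1, hIS' j.1.2⟩) g) :=
  Monoid.CoprodI.lift_of (M := fun j : Idx Γ G S I => G (fIdx Γ G S I j)) _ (i := j) g

theorem commute_L (hSS' : S ⊆ S') (v : ↥I) (hv : (↑v : V) ∈ S') (g : G (↑v : V))
    {z : GS Γ G S} (hz : z ∈ L Γ G S I v) :
    Commute (up (Γ := Γ) (G := G) hSS' z)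
      (GraphProduct.of (Γ.induce S') (fun y : S' => G (↑y : V)) (v := ⟨↑v, hv⟩) g) := by
  refine Subgroup.closure_induction ?_ ?_ ?_ ?_ hz
  · rintro x ⟨u, hadj, g', rfl⟩
    rw [up_of]
    exact of_commute (Γ := Γ.induce S') (G := fun y : S' => G (↑y : V))
      (u := ⟨↑u, hSS' u.2⟩) (v := ⟨↑v, hv⟩) (by exact hadj) g' g
  · rw [map_one]; exact Commute.one_left _
  · intro p q _ _ hp hq
    rw [map_mul]; exact hp.mul_left hq
  · intro p _ hp
    rw [map_inv]; exact hp.inv_left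

theorem conj_eq (hSS' : S ⊆ S') (v : ↥I) (hv : (↑v : V) ∈ S') (g : G (↑v : V))
    (x y : GS Γ G S)
    (hxy : (QuotientGroup.mk x : GS Γ G S ⧸ L Γ G S I v) = QuotientGroup.mk y) :
    up (Γ := Γ) (G := G) hSS' x
        * GraphProduct.of (Γ.induce S') (fun y : S' => G (↑y : V)) (v := ⟨↑v, hv⟩) g
        * (up hSS' x)⁻¹
      = up hSS' y
        * GraphProduct.of (Γ.induce S') (fun y : S' => G (↑y : V)) (v := ⟨↑v, hv⟩) g
        * (up hSS' y)⁻¹ := by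
  have hd : x⁻¹ * y ∈ L Γ G S I v := QuotientGroup.eq.mp hxy
  have hc := commute_L Γ G S S' I hSS' v hv g hd
  have hy' : y = x * (x⁻¹ * y) := by group
  have assoc : ∀ u1 d w : GS Γ G S', (u1 * d) * w * (d⁻¹ * u1⁻¹) = u1 * (d * w * d⁻¹) * u1⁻¹ := by
    intros; group
  have this1 : up (Γ := Γ) (G := G) hSS' (x⁻¹ * y)
      * GraphProduct.of (Γ.induce S') (fun y : S' => G (↑y : V)) (v := ⟨↑v, hv⟩) g
      * (up hSS' (x⁻¹ * y))⁻¹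
      = GraphProduct.of (Γ.induce S') (fun y : S' => G (↑y : V)) (v := ⟨↑v, hv⟩) g := by
    rw [hc.eq, mul_assoc, mul_inv_cancel, mul_one]
  conv_rhs => rw [hy', map_mul, mul_inv_rev, assoc, this1]

theorem compat (hSS' : S ⊆ S') (hIS' : I ⊆ S') : ∀ a : GS Γ G S,
    (psiK Γ G S S' I hSS' hIS').comp ((act Γ G S I a).toMonoidHom)
      = (MulAut.conj (up (Γ := Γ) (G := G) hSS' a)).toMonoidHom.comp
          (psiK Γ G S S' I hSS' hIS') := by
  intro a
  refine Monoid.CoprodI.ext_hom _ _ fun j => ?_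
  ext g
  show psiK Γ G S S' I hSS' hIS' (θ Γ G S I a (Monoid.CoprodI.of (i := j) g))
    = up hSS' a * psiK Γ G S S' I hSS' hIS' (Monoid.CoprodI.of (i := j) g) * (up hSS' a)⁻¹
  rw [θ_of, psiK_of, psiK_of, MulAut.conj_apply, MulAut.conj_apply]
  have assoc : ∀ u1 d w : GS Γ G S', u1 * (d * w * d⁻¹) * u1⁻¹ = (u1 * d) * w * (d⁻¹ * u1⁻¹) := by
    intros; group
  rw [assoc, ← mul_inv_rev, ← map_mul]
  refine conj_eq Γ G S S' I hSS' j.1 (hIS' j.1.2) g _ _ ?_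
  rw [QuotientGroup.out_eq']
  rw [show (QuotientGroup.mk (a * Quotient.out j.2) : GS Γ G S ⧸ L Γ G S I j.1)
    = a • (QuotientGroup.mk (Quotient.out j.2)) from by rw [MulAction.Quotient.smul_mk]; exact rfl]
  rw [QuotientGroup.out_eq']

/-- The map from the semidirect product to the graph product over `S'`. -/
noncomputable def Psi (hSS' : S ⊆ S') (hIS' : I ⊆ S') :
    K Γ G S I ⋊[act Γ G S I] GS Γ G S →* GS Γ G S' :=
  SemidirectProduct.lift (psiK Γ G S S' I hSS' hIS') (up hSS') (compat Γ G S S' I hSS' hIS')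


theorem down_of_mem {S S'' : Set V} (hss : S ⊆ S'') (x : ↥S'') (hx : (↑x : V) ∈ S)
    (a : G (↑x : V)) :
    down (Γ := Γ) (G := G) hss (GraphProduct.of (Γ.induce S'') (fun y : S'' => G (↑y : V)) (v := x) a)
      = GraphProduct.of (Γ.induce S) (fun y : S => G (↑y : V)) (v := ⟨↑x, hx⟩) a := by
  simp only [down, lift_of]
  rw [dif_pos hx]

theorem down_of_not_mem {S S'' : Set V} (hss : S ⊆ S'') (x : ↥S'') (hx : (↑x : V) ∉ S)
    (a : G (↑x : V)) :
    down (Γ := Γ) (G := G) hss (GraphProduct.of (Γ.induce S'') (fun y : S'' => G (↑y : V)) (v := x) a)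
      = 1 := by
  simp only [down, lift_of]
  rw [dif_neg hx]
  rfl

variable (hSS' : S ⊆ S') (hIS' : I ⊆ S')
  (hunion : ∀ v ∈ S', v ∈ S ∨ v ∈ I) (hind : ∀ u ∈ I, ∀ v ∈ I, ¬Γ.Adj u v)

theorem Phi_of_mem (x : ↥S') (hx : (↑x : V) ∈ S) (a : G (↑x : V)) :
    Phi Γ G S S' I hSS' hunion hind
        (GraphProduct.of (Γ.induce S') (fun y : S' => G (↑y : V)) (v := x) a)
      = SemidirectProduct.inr
          (GraphProduct.of (Γ.induce S) (fun y : S => G (↑y : V)) (v := ⟨↑x, hx⟩) a) := by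
  simp only [Phi, lift_of]
  rw [dif_pos hx]
  rfl

theorem Phi_of_not_mem (x : ↥S') (hx : (↑x : V) ∉ S) (a : G (↑x : V)) :
    Phi Γ G S S' I hSS' hunion hind
        (GraphProduct.of (Γ.induce S') (fun y : S' => G (↑y : V)) (v := x) a)
      = SemidirectProduct.inl
          (Monoid.CoprodI.of (M := fun j : Idx Γ G S I => G (fIdx Γ G S I j))
            (i := ⟨⟨↑x, (hunion ↑x x.2).resolve_left hx⟩, QuotientGroup.mk 1⟩) a) := by
  simp only [Phi, lift_of]
  rw [dif_neg hx]
  rfl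

theorem Psi_inl (k : K Γ G S I) :
    Psi Γ G S S' I hSS' hIS' (SemidirectProduct.inl k) = psiK Γ G S S' I hSS' hIS' k := by
  simp [Psi]

theorem Psi_inr (a : GS Γ G S) :
    Psi Γ G S S' I hSS' hIS' (SemidirectProduct.inr a) = up (Γ := Γ) (G := G) hSS' a := by
  simp [Psi]

theorem out_mk_one_mem (v : ↥I) :
    Quotient.out (QuotientGroup.mk 1 : GS Γ G S ⧸ L Γ G S I v) ∈ L Γ G S I v := by
  have h1 : (QuotientGroup.mk (Quotient.out (QuotientGroup.mk 1 : GS Γ G S ⧸ L Γ G S I v))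
      : GS Γ G S ⧸ L Γ G S I v) = QuotientGroup.mk 1 := QuotientGroup.out_eq' _
  have h2 := QuotientGroup.eq.mp h1
  rw [mul_one] at h2
  exact (inv_mem_iff).mp h2

theorem psi_phi :
    (Psi Γ G S S' I hSS' hIS').comp (Phi Γ G S S' I hSS' hunion hind) = MonoidHom.id _ := by
  refine hom_ext fun x a => ?_
  rw [MonoidHom.comp_apply, MonoidHom.id_apply]
  by_cases hx : (↑x : V) ∈ S
  · rw [Phi_of_mem Γ G S S' I hSS' hunion hind x hx a, Psi_inr, up_of]
  · rw [Phi_of_not_mem Γ G S S' I hSS' hunion hind x hx a, Psi_inl,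
      psiK_of, MulAut.conj_apply]
    have hc := commute_L Γ G S S' I hSS' ⟨↑x, (hunion ↑x x.2).resolve_left hx⟩ (hIS'
        ((hunion ↑x x.2).resolve_left hx)) a
      (out_mk_one_mem Γ G S I ⟨↑x, (hunion ↑x x.2).resolve_left hx⟩)
    rw [hc.eq, mul_assoc, mul_inv_cancel, mul_one]

theorem phi_up :
    (Phi Γ G S S' I hSS' hunion hind).comp (up (Γ := Γ) (G := G) hSS')
      = SemidirectProduct.inr := by
  refine hom_ext fun x a => ?_
  rw [MonoidHom.comp_apply, up_of, Phi_of_mem Γ G S S' I hSS' hunion hind ⟨↑x, hSS' x.2⟩ x.2 a]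

theorem phi_psi_inl (hdisj : ∀ v ∈ I, v ∉ S) :
    ((Phi Γ G S S' I hSS' hunion hind).comp (Psi Γ G S S' I hSS' hIS')).comp
        SemidirectProduct.inl
      = SemidirectProduct.inl := by
  refine Monoid.CoprodI.ext_hom _ _ fun j => ?_
  refine MonoidHom.ext fun g => ?_
  show Phi Γ G S S' I hSS' hunion hind (Psi Γ G S S' I hSS' hIS'
      (SemidirectProduct.inl (Monoid.CoprodI.of (i := j) g)))
    = SemidirectProduct.inl (Monoid.CoprodI.of (i := j) g)
  rw [Psi_inl, psiK_of, MulAut.conj_apply, map_mul, map_mul, map_inv]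
  have h1 := DFunLike.congr_fun (phi_up Γ G S S' I hSS' hunion hind) (Quotient.out j.2)
  rw [MonoidHom.comp_apply] at h1
  rw [h1]
  rw [Phi_of_not_mem Γ G S S' I hSS' hunion hind ⟨↑j.1, hIS' j.1.2⟩ (hdisj ↑j.1 j.1.2) g]
  rw [show (SemidirectProduct.inr (Quotient.out j.2)
        : K Γ G S I ⋊[act Γ G S I] GS Γ G S)⁻¹
      = SemidirectProduct.inr (Quotient.out j.2)⁻¹ from (map_inv _ _).symm]
  rw [← SemidirectProduct.inl_aut]
  rw [act_apply, θ_of]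
  rw [show (Quotient.out j.2) • (QuotientGroup.mk 1 : GS Γ G S ⧸ L Γ G S I j.1) = j.2 by
    rw [MulAction.Quotient.smul_mk]
    rw [show (Quotient.out j.2 : GS Γ G S) • (1 : GS Γ G S) = Quotient.out j.2 from mul_one _]
    exact QuotientGroup.out_eq' _]

theorem rightHom_phi :
    SemidirectProduct.rightHom.comp (Phi Γ G S S' I hSS' hunion hind)
      = down (Γ := Γ) (G := G) hSS' := by
  refine hom_ext fun x a => ?_
  rw [MonoidHom.comp_apply]
  by_cases hx : (↑x : V) ∈ S
  · rw [Phi_of_mem Γ G S S' I hSS' hunion hind x hx a, SemidirectProduct.rightHom_inr]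
    exact (down_of_mem Γ G hSS' x hx a).symm
  · rw [Phi_of_not_mem Γ G S S' I hSS' hunion hind x hx a, SemidirectProduct.rightHom_inl]
    exact (down_of_not_mem Γ G hSS' x hx a).symm

include hSS' hIS' hunion hind in
theorem step (hdisj : ∀ v ∈ I, v ∉ S) :
    ∃ φ : ↥((toSub (Γ := Γ) (G := G) S).ker) →* K Γ G S I,
      Function.Surjective φ ∧
        φ.ker = ((toSub (Γ := Γ) (G := G) S').ker).subgroupOf ((toSub S).ker) := by
  classical
  set χ : GraphProduct Γ G →* K Γ G S I ⋊[act Γ G S I] GS Γ G S :=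
    (Phi Γ G S S' I hSS' hunion hind).comp (toSub S') with hχ
  have hright : ∀ g : GraphProduct Γ G, (χ g).right = toSub S g := by
    intro g
    have h4 := DFunLike.congr_fun (rightHom_phi Γ G S S' I hSS' hunion hind) (toSub S' g)
    rw [MonoidHom.comp_apply] at h4
    have h5 := DFunLike.congr_fun (down_comp_toSub (Γ := Γ) (G := G) hSS') g
    rw [MonoidHom.comp_apply] at h5
    show SemidirectProduct.rightHom (χ g) = _
    rw [hχ, MonoidHom.comp_apply, h4, h5]
  refine ⟨MonoidHom.mk' (fun n => (χ (↑n : GraphProduct Γ G)).left) ?_, ?_, ?_⟩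
  · intro n n'
    have h1 : (χ (↑n : GraphProduct Γ G)).right = 1 := by
      rw [hright]; exact n.2
    show (χ (↑n * ↑n')).left = _
    rw [map_mul, SemidirectProduct.mul_left, h1, map_one, MulAut.one_apply]
  · intro k
    have e6 := DFunLike.congr_fun (toSub_comp_toFull (Γ := Γ) (G := G) (S := S'))
      (Psi Γ G S S' I hSS' hIS' (SemidirectProduct.inl k))
    rw [MonoidHom.comp_apply, MonoidHom.id_apply] at e6
    have e3 := DFunLike.congr_fun (phi_psi_inl Γ G S S' I hSS' hIS' hunion hind hdisj) k
    rw [MonoidHom.comp_apply, MonoidHom.comp_apply] at e3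
    have hmem : toFull S' (Psi Γ G S S' I hSS' hIS' (SemidirectProduct.inl k))
        ∈ (toSub (Γ := Γ) (G := G) S).ker := by
      rw [MonoidHom.mem_ker]
      have m1 := DFunLike.congr_fun (down_comp_toSub (Γ := Γ) (G := G) hSS')
        (toFull S' (Psi Γ G S S' I hSS' hIS' (SemidirectProduct.inl k)))
      rw [MonoidHom.comp_apply] at m1
      rw [← m1, e6]
      have m2 := DFunLike.congr_fun (rightHom_phi Γ G S S' I hSS' hunion hind)
        (Psi Γ G S S' I hSS' hIS' (SemidirectProduct.inl k))
      rw [MonoidHom.comp_apply] at m2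
      rw [← m2, e3, SemidirectProduct.rightHom_inl]
    refine ⟨⟨_, hmem⟩, ?_⟩
    show (χ (toFull S' (Psi Γ G S S' I hSS' hIS' (SemidirectProduct.inl k)))).left = k
    rw [hχ, MonoidHom.comp_apply, e6, e3]
    rfl
  · ext n
    rw [MonoidHom.mem_ker, Subgroup.mem_subgroupOf, MonoidHom.mem_ker]
    show (χ (↑n : GraphProduct Γ G)).left = 1 ↔ toSub S' (↑n : GraphProduct Γ G) = 1
    constructor
    · intro hl
      have h1 : (χ (↑n : GraphProduct Γ G)).right = 1 := by rw [hright]; exact n.2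
      have hone : χ (↑n : GraphProduct Γ G) = 1 := by
        ext
        · exact hl
        · exact h1
      have e1 := DFunLike.congr_fun (psi_phi Γ G S S' I hSS' hIS' hunion hind)
        (toSub S' (↑n : GraphProduct Γ G))
      rw [MonoidHom.comp_apply, MonoidHom.id_apply] at e1
      rw [← e1]
      rw [hχ, MonoidHom.comp_apply] at hone
      rw [hone, map_one]
    · intro hs
      have : χ (↑n : GraphProduct Γ G) = 1 := by
        rw [hχ, MonoidHom.comp_apply, hs, map_one]
      rw [this]
      rfl

end GPAux


/-- A graph product over a graph with chromatic number `m` has a subnormal series of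
length `m` in which every factor is a free product of copies of vertex groups.
(The factor `G_{i-1}/G_i` being isomorphic to a free product is expressed via a
surjective homomorphism from `G_{i-1}` with kernel `G_i`.) -/
theorem stmt11 {V : Type u} (Γ : SimpleGraph V) (G : V → Type u) [∀ v, Group (G v)]
    (m : ℕ) (hchr : Γ.chromaticNumber = (m : ℕ∞)) :
    ∃ s : Fin (m + 1) → Subgroup (GraphProduct Γ G),
      s 0 = ⊤ ∧ s (Fin.last m) = ⊥ ∧
      (∀ i : Fin m, s i.succ ≤ s i.castSucc) ∧
      (∀ i : Fin m, ((s i.succ).subgroupOf (s i.castSucc)).Normal) ∧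
      ∀ i : Fin m, ∃ (ι : Type u) (f : ι → V)
        (φ : ↥(s i.castSucc) →* Monoid.CoprodI fun j : ι => G (f j)),
        Function.Surjective φ ∧ φ.ker = (s i.succ).subgroupOf (s i.castSucc) := by
  classical
  obtain ⟨C⟩ : Γ.Colorable m := SimpleGraph.chromaticNumber_le_iff_colorable.mp hchr.le
  set Sf : ℕ → Set V := fun k => {v | ((C v : ℕ)) < k} with hSf
  have key : ∀ i : Fin m, ∃ φ : ↥((GPAux.toSub (Γ := Γ) (G := G) (Sf ↑(i.castSucc))).ker) →*
        GPAux.K Γ G (Sf ↑(i.castSucc)) {v | (C v : ℕ) = ↑i},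
      Function.Surjective φ ∧
        φ.ker = ((GPAux.toSub (Γ := Γ) (G := G) (Sf ↑(i.succ))).ker).subgroupOf
          ((GPAux.toSub (Sf ↑(i.castSucc))).ker) := by
    intro i
    refine GPAux.step Γ G (Sf ↑(i.castSucc)) (Sf ↑(i.succ)) {v | (C v : ℕ) = ↑i}
      ?_ ?_ ?_ ?_ ?_
    · intro v hv
      simp only [hSf, Set.mem_setOf_eq, Fin.coe_castSucc, Fin.val_succ] at hv ⊢
      omega
    · intro v hv
      simp only [Set.mem_setOf_eq] at hv
      simp only [hSf, Set.mem_setOf_eq, Fin.val_succ]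
      omega
    · intro v hv
      simp only [hSf, Set.mem_setOf_eq, Fin.coe_castSucc, Fin.val_succ] at hv ⊢
      omega
    · intro a ha b hb hadj
      simp only [Set.mem_setOf_eq] at ha hb
      exact C.valid hadj (Fin.val_injective (ha.trans hb.symm))
    · intro v hv
      simp only [Set.mem_setOf_eq] at hv
      simp only [hSf, Set.mem_setOf_eq, Fin.coe_castSucc]
      omega
  refine ⟨fun i => (GPAux.toSub (Γ := Γ) (G := G) (Sf ↑i)).ker, ?_, ?_, ?_, ?_, ?_⟩
  · -- s 0 = ⊤
    refine (Subgroup.eq_top_iff' _).mpr fun x => ?_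
    rw [MonoidHom.mem_ker]
    haveI : IsEmpty ↥(Sf ((0 : Fin (m+1)) : ℕ)) := ⟨fun y => Nat.not_lt_zero _ y.2⟩
    exact GPAux.gp_subsingleton _
  · -- s last = ⊥
    have hall : ∀ v, v ∈ Sf ((Fin.last m : Fin (m+1)) : ℕ) := fun v => by
      simp only [hSf, Fin.val_last, Set.mem_setOf_eq]
      exact (C v).isLt
    refine (Subgroup.eq_bot_iff_forall _).mpr fun x hx => ?_
    have h2 := DFunLike.congr_fun (GPAux.toFull_comp_toSub (Γ := Γ) (G := G) hall) x
    rw [MonoidHom.comp_apply, MonoidHom.id_apply] at h2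
    rw [MonoidHom.mem_ker] at hx
    rw [← h2, hx, map_one]
  · -- monotone
    intro i x hx
    have hss : Sf (↑(i.castSucc) : ℕ) ⊆ Sf (↑(i.succ) : ℕ) := fun v hv => by
      simp only [hSf, Set.mem_setOf_eq, Fin.coe_castSucc, Fin.val_succ] at hv ⊢
      omega
    rw [MonoidHom.mem_ker] at hx ⊢
    have h5 := DFunLike.congr_fun (GPAux.down_comp_toSub (Γ := Γ) (G := G) hss) x
    rw [MonoidHom.comp_apply] at h5
    rw [← h5, hx, map_one]
  · -- normality
    intro i
    obtain ⟨φ, hsurj, hker⟩ := key i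
    rw [← hker]
    exact φ.normal_ker
  · -- the factors
    intro i
    obtain ⟨φ, hsurj, hker⟩ := key i
    exact ⟨GPAux.Idx Γ G (Sf ↑(i.castSucc)) {v | (C v : ℕ) = ↑i},
      GPAux.fIdx Γ G (Sf ↑(i.castSucc)) {v | (C v : ℕ) = ↑i}, φ, hsurj, hker⟩
end

section
/- For a graph product G = 𝒢(Γ; G_v) with generating set X = ⋃_v X_v, any non-geodesic word w over X representing an element g can be transformed into a strictly shorter word representing g by a sequence of shuffles followed by replacing a subword over some X_v by a shorter word over X_v equal to it in G_v. -/
variable {V : Type*}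

open scoped commutatorElement

/-- Evaluation of a list of syllables in the graph product. -/
def exprProd (Γ : SimpleGraph V) (G : V → Type*) [∀ v, Group (G v)]
    (w : List (Σ v, G v)) : GraphProduct Γ G :=
  (w.map fun s => GraphProduct.of Γ G s.2).prod

/-- An expression is reduced if it has minimal length among all expressions
for the same element. -/
def IsReducedExpr (Γ : SimpleGraph V) (G : V → Type*) [∀ v, Group (G v)]
    (w : List (Σ v, G v)) : Prop :=
  ∀ w' : List (Σ v, G v), exprProd Γ G w' = exprProd Γ G w → w.length ≤ w'.length

/-- A word over the union of the generating sets `X v`. -/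
def IsXWord {G : V → Type*} (X : ∀ v, Set (G v)) (w : List (Σ v, G v)) : Prop :=
  ∀ s ∈ w, s.2 ∈ X s.1

/-- A geodesic word over `X`: an `X`-word of minimal length among `X`-words
representing the same element. -/
def IsGeodesicWord (Γ : SimpleGraph V) (G : V → Type*) [∀ v, Group (G v)]
    (X : ∀ v, Set (G v)) (w : List (Σ v, G v)) : Prop :=
  IsXWord X w ∧ ∀ w' : List (Σ v, G v), IsXWord X w' →
    exprProd Γ G w' = exprProd Γ G w → w.length ≤ w'.length

/-- A shuffle swaps two adjacent letters lying in vertex groups of adjacent vertices. -/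
def ShuffleStep (Γ : SimpleGraph V) (G : V → Type*) [∀ v, Group (G v)]
    (w w' : List (Σ v, G v)) : Prop :=
  ∃ (p q : List (Σ v, G v)) (s t : Σ v, G v), Γ.Adj s.1 t.1 ∧
    w = p ++ s :: t :: q ∧ w' = p ++ t :: s :: q

/-- Word metric on the graph product with respect to `X`. -/
noncomputable def wordDist (Γ : SimpleGraph V) (G : V → Type*) [∀ v, Group (G v)]
    (X : ∀ v, Set (G v)) (g h : GraphProduct Γ G) : ℕ :=
  sInf {k | ∃ w : List (Σ v, G v), IsXWord X w ∧ exprProd Γ G w = g⁻¹ * h ∧ w.length = k}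

/-- Word length with respect to a generating set `S`. -/
noncomputable def wordLength {G : Type*} [Group G] (S : Set G) (g : G) : ℕ :=
  sInf {k | ∃ w : List G, (∀ x ∈ w, x ∈ S) ∧ w.prod = g ∧ w.length = k}

/-- A group is word-hyperbolic if, with respect to some finite symmetric generating set,
the word metric satisfies Gromov's four-point condition. -/
def IsHyperbolicGroup (G : Type*) [Group G] : Prop :=
  ∃ S : Finset G, Subgroup.closure (S : Set G) = ⊤ ∧ (∀ x ∈ S, x⁻¹ ∈ (S : Set G)) ∧
    ∃ δ : ℝ, ∀ x y z w : G,
      (wordLength (S : Set G) (x⁻¹ * z) + wordLength (S : Set G) (y⁻¹ * w) : ℝ) ≤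
        max ((wordLength (S : Set G) (x⁻¹ * y) + wordLength (S : Set G) (z⁻¹ * w) : ℝ))
            ((wordLength (S : Set G) (x⁻¹ * w) + wordLength (S : Set G) (y⁻¹ * z) : ℝ)) + δ

section GPAux
set_option linter.unusedSectionVars false
open Relation List

variable {V : Type*} {Γ : SimpleGraph V} {G : V → Type*} [∀ v, Group (G v)]

/-- Shuffle equivalence. -/
def SEq (Γ : SimpleGraph V) (G : V → Type*) [∀ v, Group (G v)]
    (w u : List (Σ v, G v)) : Prop :=
  Relation.ReflTransGen (ShuffleStep Γ G) w u

theorem ShuffleStep.symm {w u : List (Σ v, G v)} (h : ShuffleStep Γ G w u) :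
    ShuffleStep Γ G u w := by
  obtain ⟨p, q, s, t, hadj, h1, h2⟩ := h
  exact ⟨p, q, t, s, hadj.symm, h2, h1⟩

theorem SEq.refl (w : List (Σ v, G v)) : SEq Γ G w w := ReflTransGen.refl

theorem SEq.trans {w u x : List (Σ v, G v)} (h : SEq Γ G w u) (h' : SEq Γ G u x) :
    SEq Γ G w x := ReflTransGen.trans h h'

theorem SEq.symm {w u : List (Σ v, G v)} (h : SEq Γ G w u) : SEq Γ G u w := by
  induction h with
  | refl => exact ReflTransGen.refl
  | tail _ hstep ih => exact ReflTransGen.trans (ReflTransGen.single hstep.symm) ih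

theorem SEq.single {w u : List (Σ v, G v)} (h : ShuffleStep Γ G w u) : SEq Γ G w u :=
  ReflTransGen.single h

theorem SEq.append_left {w u : List (Σ v, G v)} (p : List (Σ v, G v))
    (h : SEq Γ G w u) : SEq Γ G (p ++ w) (p ++ u) := by
  induction h with
  | refl => exact ReflTransGen.refl
  | tail _ hstep ih =>
      obtain ⟨a, b, s, t, hadj, h1, h2⟩ := hstep
      exact ih.tail ⟨p ++ a, b, s, t, hadj, by simp [h1], by simp [h2]⟩

theorem SEq.append_right {w u : List (Σ v, G v)} (q : List (Σ v, G v))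
    (h : SEq Γ G w u) : SEq Γ G (w ++ q) (u ++ q) := by
  induction h with
  | refl => exact ReflTransGen.refl
  | tail _ hstep ih =>
      obtain ⟨a, b, s, t, hadj, h1, h2⟩ := hstep
      exact ih.tail ⟨a, b ++ q, s, t, hadj, by simp [h1], by simp [h2]⟩

theorem SEq.cons (x : Σ v, G v) {w u : List (Σ v, G v)} (h : SEq Γ G w u) :
    SEq Γ G (x :: w) (x :: u) := by
  simpa using h.append_left [x]

theorem SEq.perm {w u : List (Σ v, G v)} (h : SEq Γ G w u) : w.Perm u := by
  induction h with
  | refl => exact List.Perm.refl _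
  | tail _ hstep ih =>
      obtain ⟨a, b, s, t, _, h1, h2⟩ := hstep
      subst h1 h2
      exact ih.trans (List.Perm.append_left _ (List.Perm.swap' _ _ (List.Perm.refl _)))

theorem exprProd_nil : exprProd Γ G [] = 1 := rfl

theorem exprProd_cons (x : Σ v, G v) (w : List (Σ v, G v)) :
    exprProd Γ G (x :: w) = GraphProduct.of Γ G x.2 * exprProd Γ G w := by
  simp [exprProd]

theorem exprProd_append (w u : List (Σ v, G v)) :
    exprProd Γ G (w ++ u) = exprProd Γ G w * exprProd Γ G u := by
  simp [exprProd]

theorem of_comm {u v : V} (h : Γ.Adj u v) (a : G u) (b : G v) :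
    GraphProduct.of Γ G a * GraphProduct.of Γ G b =
      GraphProduct.of Γ G b * GraphProduct.of Γ G a := by
  have hmem : ⁅Monoid.CoprodI.of a, Monoid.CoprodI.of b⁆ ∈
      Subgroup.normalClosure (graphProductRels Γ G) :=
    Subgroup.subset_normalClosure ⟨u, v, h, a, b, rfl⟩
  have h1 : (QuotientGroup.mk' (Subgroup.normalClosure (graphProductRels Γ G)))
      ⁅Monoid.CoprodI.of a, Monoid.CoprodI.of b⁆ = 1 := by
    rwa [QuotientGroup.mk'_apply, QuotientGroup.eq_one_iff]
  rw [map_commutatorElement] at h1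
  have h2 := commutatorElement_eq_one_iff_mul_comm.mp h1
  simp only [GraphProduct.of, MonoidHom.comp_apply]
  exact h2

theorem SEq.exprProd_eq {w u : List (Σ v, G v)} (h : SEq Γ G w u) :
    exprProd Γ G w = exprProd Γ G u := by
  induction h with
  | refl => rfl
  | tail _ hstep ih =>
      obtain ⟨a, b, s, t, hadj, h1, h2⟩ := hstep
      subst h1 h2
      rw [ih]
      simp only [exprProd_append, exprProd_cons]
      congr 1
      rw [← mul_assoc, ← mul_assoc, of_comm hadj]

theorem SEq.bubble {y : Σ v, G v} {l : List (Σ v, G v)}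
    (h : ∀ z ∈ l, Γ.Adj z.1 y.1) (m : List (Σ v, G v)) :
    SEq Γ G (l ++ y :: m) (y :: (l ++ m)) := by
  induction l with
  | nil => exact SEq.refl _
  | cons a l ih =>
      have h1 : SEq Γ G (a :: (l ++ y :: m)) (a :: (y :: (l ++ m))) :=
        (ih (fun z hz => h z (by simp [hz]))).cons a
      refine h1.trans (SEq.single ⟨[], l ++ m, a, y, h a (by simp), rfl, rfl⟩)

end GPAux

section GPProj
set_option linter.unusedSectionVars false
open Relation List

attribute [local instance] Classical.propDecidable

variable {V : Type*} {Γ : SimpleGraph V} {G : V → Type*} [∀ v, Group (G v)]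

/-- Projection to the letters with vertex `p` or `q`. -/
noncomputable def prj (p q : V) (w : List (Σ v, G v)) : List (Σ v, G v) :=
  w.filter (fun s => decide (s.1 = p ∨ s.1 = q))

theorem prj_append (p q : V) (w u : List (Σ v, G v)) :
    prj p q (w ++ u) = prj p q w ++ prj p q u := by
  simp [prj]

theorem prj_cons_pos (p q : V) (x : Σ v, G v) (w : List (Σ v, G v))
    (h : x.1 = p ∨ x.1 = q) : prj p q (x :: w) = x :: prj p q w := by
  simp [prj, List.filter_cons, h]

theorem prj_cons_neg (p q : V) (x : Σ v, G v) (w : List (Σ v, G v))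
    (h : ¬(x.1 = p ∨ x.1 = q)) : prj p q (x :: w) = prj p q w := by
  simp [prj, List.filter_cons, h]

/-- Projection equivalence. -/
def PEq (Γ : SimpleGraph V) (G : V → Type*) [∀ v, Group (G v)]
    (w u : List (Σ v, G v)) : Prop :=
  ∀ p q : V, (p = q ∨ ¬ Γ.Adj p q) → prj p q w = prj p q u

theorem PEq.refl (w : List (Σ v, G v)) : PEq Γ G w w := fun _ _ _ => rfl

theorem PEq.symm {w u : List (Σ v, G v)} (h : PEq Γ G w u) : PEq Γ G u w :=
  fun p q hpq => (h p q hpq).symm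

theorem PEq.trans {w u x : List (Σ v, G v)} (h : PEq Γ G w u) (h' : PEq Γ G u x) :
    PEq Γ G w x := fun p q hpq => (h p q hpq).trans (h' p q hpq)

theorem ShuffleStep.pEq {w u : List (Σ v, G v)} (h : ShuffleStep Γ G w u) :
    PEq Γ G w u := by
  obtain ⟨a, b, s, t, hadj, h1, h2⟩ := h
  subst h1 h2
  intro p q hpq
  rw [prj_append, prj_append]
  congr 1
  by_cases hs : (s.1 = p ∨ s.1 = q) <;> by_cases ht : (t.1 = p ∨ t.1 = q)
  · exfalso
    rcases hpq with rfl | hna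
    · have : s.1 = t.1 := by
        rcases hs with h | h <;> rcases ht with h' | h' <;> rw [h, h']
      exact Γ.loopless.irrefl _ (this ▸ hadj)
    · rcases hs with h | h <;> rcases ht with h' | h' <;> rw [h, h'] at hadj
      · exact Γ.loopless.irrefl _ hadj
      · exact hna hadj
      · exact hna hadj.symm
      · exact Γ.loopless.irrefl _ hadj
  · rw [prj_cons_pos _ _ _ _ hs, prj_cons_neg _ _ _ _ ht,
      prj_cons_neg _ _ _ _ ht, prj_cons_pos _ _ _ _ hs]
  · rw [prj_cons_neg _ _ _ _ hs, prj_cons_pos _ _ _ _ ht,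
      prj_cons_pos _ _ _ _ ht, prj_cons_neg _ _ _ _ hs]
  · rw [prj_cons_neg _ _ _ _ hs, prj_cons_neg _ _ _ _ ht,
      prj_cons_neg _ _ _ _ ht, prj_cons_neg _ _ _ _ hs]

theorem SEq.pEq {w u : List (Σ v, G v)} (h : SEq Γ G w u) : PEq Γ G w u := by
  induction h with
  | refl => exact PEq.refl _
  | tail _ hstep ih => exact ih.trans hstep.pEq

/-- First occurrence of a letter with vertex `v`. -/
theorem exists_first (v : V) (w : List (Σ v, G v)) (hne : prj v v w ≠ []) :
    ∃ (a : List (Σ v, G v)) (x : Σ v, G v) (b : List (Σ v, G v)),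
      w = a ++ x :: b ∧ x.1 = v ∧ (∀ z ∈ a, z.1 ≠ v) ∧ prj v v w = x :: prj v v b := by
  induction w with
  | nil => simp [prj] at hne
  | cons y w ih =>
      by_cases hy : y.1 = v
      · exact ⟨[], y, w, rfl, hy, by simp, prj_cons_pos _ _ _ _ (Or.inl hy)⟩
      · have hne' : prj v v w ≠ [] := by
          rwa [prj_cons_neg _ _ _ _ (by tauto)] at hne
        obtain ⟨a, x, b, h1, h2, h3, h4⟩ := ih hne'
        exact ⟨y :: a, x, b, by rw [h1]; rfl, h2,
          fun z hz => (List.mem_cons.mp hz).elim (fun h => h ▸ hy) (h3 z),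
          by rw [prj_cons_neg _ _ _ _ (by tauto)]; exact h4⟩

end GPProj

section GPCore
set_option linter.unusedSectionVars false
open Relation List

attribute [local instance] Classical.propDecidable

variable {V : Type*} {Γ : SimpleGraph V} {G : V → Type*} [∀ v, Group (G v)]

theorem PEq.core {w t : List (Σ v, G v)} {y : Σ v, G v} (h : PEq Γ G w (y :: t)) :
    ∃ w₁ w₂, w = w₁ ++ y :: w₂ ∧ (∀ z ∈ w₁, z.1 ≠ y.1 ∧ Γ.Adj z.1 y.1) ∧
      PEq Γ G (w₁ ++ w₂) t := by
  have hvv : prj y.1 y.1 w = y :: prj y.1 y.1 t := by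
    have h0 := h y.1 y.1 (Or.inl rfl)
    rwa [prj_cons_pos _ _ _ _ (Or.inl rfl)] at h0
  obtain ⟨a, x, b, rfl, hx1, ha, hproj⟩ := exists_first y.1 w (by rw [hvv]; simp)
  rw [hvv] at hproj
  obtain ⟨rfl, hb⟩ : x = y ∧ prj y.1 y.1 t = prj y.1 y.1 b := by
    rw [List.cons.injEq] at hproj; exact ⟨hproj.1.symm, hproj.2⟩
  have hadj : ∀ z ∈ a, z.1 ≠ x.1 ∧ Γ.Adj z.1 x.1 := by
    intro z hz
    refine ⟨ha z hz, ?_⟩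
    by_contra hna
    have hp := h z.1 x.1 (Or.inr hna)
    rw [prj_append, prj_cons_pos _ _ x _ (Or.inr rfl),
      prj_cons_pos _ _ x _ (Or.inr rfl)] at hp
    have hzin : z ∈ prj z.1 x.1 a := by
      simp [prj, List.mem_filter, hz]
    cases hpa : prj z.1 x.1 a with
    | nil => rw [hpa] at hzin; simp at hzin
    | cons h0 r =>
        rw [hpa] at hp
        have hh0y : h0 = x := by
          have := congrArg List.head? hp
          simpa using this
        have hh0a : h0 ∈ a := List.mem_of_mem_filter (hpa ▸ (List.mem_cons_self : h0 ∈ h0 :: r))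
        exact ha h0 hh0a (by rw [hh0y])
  refine ⟨a, b, rfl, hadj, ?_⟩
  intro p q hpq
  have hp := h p q hpq
  rw [prj_append] at hp ⊢
  by_cases hy : (x.1 = p ∨ x.1 = q)
  · rw [prj_cons_pos _ _ _ _ hy, prj_cons_pos _ _ _ _ hy] at hp
    have hnil : prj p q a = [] := by
      simp only [prj, List.filter_eq_nil_iff, decide_eq_true_eq]
      intro z hz hzpq
      have h1 := (hadj z hz).1
      have h2 := (hadj z hz).2
      rcases hpq with rfl | hna
      · apply h1
        rcases hy with h' | h' <;> rcases hzpq with h'' | h'' <;> rw [h'', h']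
      · rcases hy with h' | h' <;> rcases hzpq with h'' | h''
        · exact h1 (h''.trans h'.symm)
        · exact hna (by rw [← h'', ← h']; exact h2.symm)
        · exact hna (by rw [← h'', ← h']; exact h2)
        · exact h1 (h''.trans h'.symm)
    rw [hnil] at hp ⊢
    simp only [List.nil_append, List.cons.injEq] at hp
    exact hp.2
  · rw [prj_cons_neg _ _ _ _ hy, prj_cons_neg _ _ _ _ hy] at hp
    exact hp

theorem PEq.seq {w u : List (Σ v, G v)} (h : PEq Γ G w u) : SEq Γ G w u := by
  induction w generalizing u with
  | nil =>
      cases u with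
      | nil => exact SEq.refl _
      | cons y r =>
          exfalso
          have h0 := (h y.1 y.1 (Or.inl rfl)).symm
          rw [prj_cons_pos _ _ _ _ (Or.inl rfl)] at h0
          simp [prj] at h0
  | cons x t ih =>
      obtain ⟨u₁, u₂, rfl, hadj, hrest⟩ := PEq.core h.symm
      have h1 : SEq Γ G t (u₁ ++ u₂) := ih hrest.symm
      have h2 : SEq Γ G (x :: (u₁ ++ u₂)) (u₁ ++ x :: u₂) :=
        (SEq.bubble (fun z hz => (hadj z hz).2) u₂).symm
      exact (h1.cons x).trans h2

theorem seq_iff_pEq {w u : List (Σ v, G v)} : SEq Γ G w u ↔ PEq Γ G w u :=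
  ⟨SEq.pEq, PEq.seq⟩

theorem SEq.cancel {x : Σ v, G v} {t s : List (Σ v, G v)}
    (h : SEq Γ G (x :: t) (x :: s)) : SEq Γ G t s := by
  apply PEq.seq
  intro p q hpq
  have hp := h.pEq p q hpq
  by_cases hx : (x.1 = p ∨ x.1 = q)
  · rw [prj_cons_pos _ _ _ _ hx, prj_cons_pos _ _ _ _ hx] at hp
    exact (List.cons.injEq _ _ _ _ ▸ hp).2
  · rwa [prj_cons_neg _ _ _ _ hx, prj_cons_neg _ _ _ _ hx] at hp

theorem SEq.front_unique {w : List (Σ v, G v)} {v : V} {b b' : G v}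
    {t t' : List (Σ v, G v)} (h : SEq Γ G w (⟨v, b⟩ :: t)) (h' : SEq Γ G w (⟨v, b'⟩ :: t')) :
    b = b' ∧ SEq Γ G t t' := by
  have h1 := (h.symm.trans h').pEq v v (Or.inl rfl)
  rw [prj_cons_pos v v ⟨v, b⟩ t (Or.inl rfl), prj_cons_pos v v ⟨v, b'⟩ t' (Or.inl rfl)] at h1
  have hbb : b = b' := by
    have := (List.cons.injEq _ _ _ _ ▸ h1).1
    exact (Sigma.mk.inj_iff.mp this).2.eq
  subst hbb
  exact ⟨rfl, SEq.cancel (h.symm.trans h')⟩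

theorem SEq.extract {w t : List (Σ v, G v)} {y : Σ v, G v} (h : SEq Γ G w (y :: t)) :
    ∃ w₁ w₂, w = w₁ ++ y :: w₂ ∧ (∀ z ∈ w₁, z.1 ≠ y.1 ∧ Γ.Adj z.1 y.1) ∧
      SEq Γ G (w₁ ++ w₂) t := by
  obtain ⟨w₁, w₂, rfl, hadj, hrest⟩ := PEq.core h.pEq
  exact ⟨w₁, w₂, rfl, hadj, hrest.seq⟩

end GPCore

section GPRed
set_option linter.unusedSectionVars false
open Relation List

variable {V : Type*} {Γ : SimpleGraph V} {G : V → Type*} [∀ v, Group (G v)]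

/-- Two adjacent letters with the same vertex. -/
def HasPair (w : List (Σ v, G v)) : Prop :=
  ∃ (p : List (Σ v, G v)) (s t : Σ v, G v) (q : List (Σ v, G v)),
    w = p ++ s :: t :: q ∧ s.1 = t.1

def NoMerge (Γ : SimpleGraph V) (G : V → Type*) [∀ v, Group (G v)]
    (w : List (Σ v, G v)) : Prop :=
  ∀ u, SEq Γ G w u → ¬ HasPair u

def Red (Γ : SimpleGraph V) (G : V → Type*) [∀ v, Group (G v)]
    (w : List (Σ v, G v)) : Prop :=
  (∀ s ∈ w, s.2 ≠ (1 : G s.1)) ∧ NoMerge Γ G w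

theorem Red.of_seq {w u : List (Σ v, G v)} (h : SEq Γ G w u) (hw : Red Γ G w) :
    Red Γ G u := by
  refine ⟨fun s hs => hw.1 s (h.perm.symm.subset hs), fun x hx => hw.2 x (h.trans hx)⟩

theorem Red.tail {x : Σ v, G v} {t : List (Σ v, G v)} (h : Red Γ G (x :: t)) :
    Red Γ G t := by
  refine ⟨fun s hs => h.1 s (List.mem_cons_of_mem _ hs), ?_⟩
  intro u hu hpair
  obtain ⟨p, s, t', q, rfl, hst⟩ := hpair
  exact h.2 (x :: (p ++ s :: t' :: q)) (hu.cons x) ⟨x :: p, s, t', q, rfl, hst⟩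

theorem map_fst_decomp {w' p q : List (Σ v, G v)} {s t : Σ v, G v}
    (h : w'.map Sigma.fst = (p ++ s :: t :: q).map Sigma.fst) :
    ∃ (p' : List (Σ v, G v)) (s' t' : Σ v, G v) (q' : List (Σ v, G v)),
      w' = p' ++ s' :: t' :: q' ∧ p'.map Sigma.fst = p.map Sigma.fst ∧
      s'.1 = s.1 ∧ t'.1 = t.1 ∧ q'.map Sigma.fst = q.map Sigma.fst := by
  induction p generalizing w' with
  | nil =>
      cases w' with
      | nil => simp at h
      | cons a w'' =>
          cases w'' with
          | nil => simp at h
          | cons b w''' =>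
              simp only [List.map_cons, List.nil_append, List.cons.injEq] at h
              exact ⟨[], a, b, w''', rfl, rfl, h.1, h.2.1, h.2.2⟩
  | cons x p ih =>
      cases w' with
      | nil => simp at h
      | cons a w'' =>
          simp only [List.map_cons, List.cons_append, List.cons.injEq] at h
          obtain ⟨p', s', t', q', rfl, h1, h2, h3, h4⟩ := ih h.2
          exact ⟨a :: p', s', t', q', rfl, by simp [h.1, h1], h2, h3, h4⟩

theorem NoMerge.relabel {w w' : List (Σ v, G v)}
    (hm : w'.map Sigma.fst = w.map Sigma.fst) (h : NoMerge Γ G w) : NoMerge Γ G w' := by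
  have key : ∀ u', SEq Γ G w' u' → ∃ u, SEq Γ G w u ∧ u'.map Sigma.fst = u.map Sigma.fst := by
    intro u' h'
    induction h' with
    | refl => exact ⟨w, SEq.refl _, hm⟩
    | tail hseq hstep ih =>
        obtain ⟨u, hu, hmap⟩ := ih
        obtain ⟨p, q, s, t, hadj, h1, h2⟩ := hstep
        subst h1 h2
        have hmap' : u.map Sigma.fst = (p ++ s :: t :: q).map Sigma.fst := hmap.symm
        obtain ⟨p', s', t', q', rfl, g1, g2, g3, g4⟩ := map_fst_decomp hmap'
        refine ⟨p' ++ t' :: s' :: q', hu.tail ⟨p', q', s', t', by rwa [g2, g3], rfl, rfl⟩, ?_⟩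
        simp [g1, g2, g3, g4]
  intro u' hseq hpair
  obtain ⟨u, hu, hmap⟩ := key u' hseq
  obtain ⟨p, s, t, q, rfl, hst⟩ := hpair
  obtain ⟨p', s', t', q', rfl, g1, g2, g3, g4⟩ := map_fst_decomp hmap.symm
  exact h _ hu ⟨p', s', t', q', rfl, by rw [g2, g3, hst]⟩

theorem Red.no_front_tail {v : V} {b : G v} {t : List (Σ v, G v)}
    (h : Red Γ G (⟨v, b⟩ :: t)) : ¬∃ (d : G v) (t' : List (Σ v, G v)), SEq Γ G t (⟨v, d⟩ :: t') := by
  rintro ⟨d, t', hseq⟩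
  exact h.2 _ (hseq.cons ⟨v, b⟩) ⟨[], ⟨v, b⟩, ⟨v, d⟩, t', rfl, rfl⟩

theorem Red.cons_no_front {v : V} {a : G v} {w : List (Σ v, G v)} (hw : Red Γ G w)
    (hnf : ¬∃ (b : G v) (t : List (Σ v, G v)), SEq Γ G w (⟨v, b⟩ :: t)) (ha : a ≠ 1) :
    Red Γ G (⟨v, a⟩ :: w) := by
  constructor
  · intro s hs
    rcases List.mem_cons.mp hs with rfl | hs'
    · exact ha
    · exact hw.1 s hs'
  · intro u hseq hpair
    obtain ⟨p, s, t, q, hu, hst⟩ := hpair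
    subst hu
    obtain ⟨u₁, u₂, hdec, hadj, hrest⟩ := SEq.extract hseq.symm
    rw [List.append_eq_append_iff] at hdec
    rcases hdec with ⟨a', ha1, ha2⟩ | ⟨c', hc1, hc2⟩
    · cases a' with
      | nil =>
          obtain ⟨rfl, rfl⟩ : s = ⟨v, a⟩ ∧ t :: q = u₂ := by
            simp only [List.nil_append, List.cons.injEq] at ha2; exact ⟨ha2.1, ha2.2⟩
          obtain ⟨tv, t2⟩ := t
          have htv : tv = v := by simpa using hst.symm
          subst htv
          apply hnf
          refine ⟨t2, u₁ ++ q, hrest.symm.trans (SEq.bubble ?_ q)⟩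
          intro z hz
          exact (hadj z hz).2
      | cons y a'' =>
          obtain ⟨rfl, ha2'⟩ : s = y ∧ t :: q = a'' ++ ⟨v, a⟩ :: u₂ := by
            rw [List.cons_append, List.cons.injEq] at ha2; exact ⟨ha2.1, ha2.2⟩
          cases a'' with
          | nil =>
              obtain ⟨rfl, rfl⟩ : t = ⟨v, a⟩ ∧ q = u₂ := by
                simp only [List.nil_append, List.cons.injEq] at ha2'; exact ⟨ha2'.1, ha2'.2⟩
              have hyin : s ∈ u₁ := by rw [ha1]; simp
              exact (hadj s hyin).1 (by simpa using hst)
          | cons z a''' =>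
              obtain ⟨rfl, rfl⟩ : t = z ∧ q = a''' ++ ⟨v, a⟩ :: u₂ := by
                rw [List.cons_append, List.cons.injEq] at ha2'; exact ⟨ha2'.1, ha2'.2⟩
              apply hw.2 _ hrest.symm
              refine ⟨p, s, t, a''' ++ u₂, ?_, hst⟩
              rw [ha1]; simp
    · cases c' with
      | nil =>
          obtain ⟨rfl, rfl⟩ : s = ⟨v, a⟩ ∧ t :: q = u₂ := by
            simp only [List.nil_append, List.cons.injEq] at hc2; exact ⟨hc2.1.symm, hc2.2.symm⟩
          obtain ⟨tv, t2⟩ := t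
          have htv : tv = v := by simpa using hst.symm
          subst htv
          apply hnf
          refine ⟨t2, u₁ ++ q, hrest.symm.trans (SEq.bubble ?_ q)⟩
          intro z hz
          exact (hadj z hz).2
      | cons y c'' =>
          obtain ⟨rfl, rfl⟩ : y = ⟨v, a⟩ ∧ u₂ = c'' ++ s :: t :: q := by
            rw [List.cons_append, List.cons.injEq] at hc2; exact ⟨hc2.1.symm, hc2.2⟩
          exact hw.2 _ hrest.symm ⟨u₁ ++ c'', s, t, q, by simp, hst⟩
end GPRed

section GPAct
set_option linter.unusedSectionVars false
open Relation List

attribute [local instance] Classical.propDecidable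

variable {V : Type*} {Γ : SimpleGraph V} {G : V → Type*} [∀ v, Group (G v)]

theorem red_nil : Red Γ G ([] : List (Σ v, G v)) := by
  constructor
  · simp
  · intro u hu hpair
    obtain ⟨p, s, t, q, rfl, _⟩ := hpair
    have := hu.perm.length_eq
    simp at this

theorem red_front_cons {v : V} {b c : G v} {t : List (Σ v, G v)}
    (h : Red Γ G (⟨v, b⟩ :: t)) (hc : c ≠ 1) : Red Γ G (⟨v, c⟩ :: t) := by
  refine ⟨?_, NoMerge.relabel (by simp) h.2⟩
  intro s hs
  rcases List.mem_cons.mp hs with rfl | hs'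
  · exact hc
  · exact h.1 s (List.mem_cons_of_mem _ hs')

/-- `w` has a letter of vertex `v` which can be shuffled to the front. -/
def Front (Γ : SimpleGraph V) (G : V → Type*) [∀ v, Group (G v)] (v : V)
    (w : List (Σ v, G v)) : Prop :=
  ∃ p : G v × List (Σ v, G v), SEq Γ G w (⟨v, p.1⟩ :: p.2)

noncomputable def frontB {v : V} {w : List (Σ v, G v)} (h : Front Γ G v w) : G v :=
  (Classical.choose h).1

noncomputable def frontT {v : V} {w : List (Σ v, G v)} (h : Front Γ G v w) :
    List (Σ v, G v) := (Classical.choose h).2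

theorem front_spec {v : V} {w : List (Σ v, G v)} (h : Front Γ G v w) :
    SEq Γ G w (⟨v, frontB h⟩ :: frontT h) := Classical.choose_spec h

theorem front_iff {v : V} {w : List (Σ v, G v)} :
    Front Γ G v w ↔ ∃ (w₁ : List (Σ v, G v)) (y : Σ v, G v) (w₂ : List (Σ v, G v)),
      w = w₁ ++ y :: w₂ ∧ y.1 = v ∧ ∀ z ∈ w₁, Γ.Adj z.1 v := by
  constructor
  · rintro ⟨⟨b, t⟩, h⟩
    obtain ⟨w₁, w₂, rfl, hadj, _⟩ := SEq.extract h
    exact ⟨w₁, ⟨v, b⟩, w₂, rfl, rfl, fun z hz => (hadj z hz).2⟩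
  · rintro ⟨w₁, ⟨yv, yd⟩, w₂, rfl, hy, hadj⟩
    subst hy
    exact ⟨(yd, w₁ ++ w₂), SEq.bubble (fun z hz => hadj z hz) w₂⟩

theorem front_cons_iff {u v : V} (hne : u ≠ v) {x : Σ v, G v} (hx : x.1 = u)
    {w : List (Σ v, G v)} :
    Front Γ G v (x :: w) ↔ (Γ.Adj u v ∧ Front Γ G v w) := by
  constructor
  · intro h
    rw [front_iff] at h
    obtain ⟨w₁, y, w₂, hdec, hy, hadj⟩ := h
    cases w₁ with
    | nil =>
        exfalso
        rw [List.nil_append, List.cons.injEq] at hdec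
        exact hne (by rw [← hx, hdec.1, hy])
    | cons z w₁' =>
        rw [List.cons_append, List.cons.injEq] at hdec
        obtain ⟨rfl, rfl⟩ : x = z ∧ w = w₁' ++ y :: w₂ := hdec
        refine ⟨hx ▸ hadj x (by simp), ?_⟩
        rw [front_iff]
        exact ⟨w₁', y, w₂, rfl, hy, fun z hz => hadj z (by simp [hz])⟩
  · rintro ⟨hadj, hf⟩
    rw [front_iff] at hf ⊢
    obtain ⟨w₁, y, w₂, rfl, hy, hadj'⟩ := hf
    exact ⟨x :: w₁, y, w₂, rfl, hy, by
      intro z hz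
      rcases List.mem_cons.mp hz with rfl | hz'
      · rwa [hx]
      · exact hadj' z hz'⟩

theorem no_front_of_red_cons {v : V} {b : G v} {t : List (Σ v, G v)}
    (h : Red Γ G (⟨v, b⟩ :: t)) : ¬ Front Γ G v t := by
  rintro ⟨⟨d, t'⟩, hseq⟩
  exact h.no_front_tail ⟨d, t', hseq⟩

/-- The reduced words. -/
def RedWord (Γ : SimpleGraph V) (G : V → Type*) [∀ v, Group (G v)] : Type _ :=
  {w : List (Σ v, G v) // Red Γ G w}

instance redSetoid (Γ : SimpleGraph V) (G : V → Type*) [∀ v, Group (G v)] :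
    Setoid (RedWord Γ G) :=
  ⟨fun w u => SEq Γ G w.1 u.1, fun _ => SEq.refl _, SEq.symm, SEq.trans⟩

/-- Shuffle classes of reduced words. -/
def RW (Γ : SimpleGraph V) (G : V → Type*) [∀ v, Group (G v)] : Type _ :=
  Quotient (redSetoid Γ G)

def RWmk (w : List (Σ v, G v)) (h : Red Γ G w) : RW Γ G :=
  Quotient.mk (redSetoid Γ G) ⟨w, h⟩

theorem RWmk_eq {w u : List (Σ v, G v)} (h : SEq Γ G w u) {hw : Red Γ G w}
    {hu : Red Γ G u} : RWmk w hw = RWmk u hu := Quotient.sound h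

theorem RWmk_exact {w u : List (Σ v, G v)} {hw : Red Γ G w} {hu : Red Γ G u}
    (h : RWmk w hw = RWmk u hu) : SEq Γ G w u := Quotient.exact h

noncomputable def act0 {v : V} (a : G v) (w : RedWord Γ G) : RW Γ G :=
  if h : Front Γ G v w.1 then
    if hab : a * frontB h = 1 then
      RWmk (frontT h) ((Red.of_seq (front_spec h) w.2).tail)
    else
      RWmk (⟨v, a * frontB h⟩ :: frontT h)
        (red_front_cons (Red.of_seq (front_spec h) w.2) hab)
  else
    if ha : a = 1 then RWmk w.1 w.2
    else RWmk (⟨v, a⟩ :: w.1)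
      (Red.cons_no_front w.2 (fun ⟨b, t, hseq⟩ => h ⟨(b, t), hseq⟩) ha)

theorem act0_welldef {v : V} (a : G v) {w w' : RedWord Γ G} (h : SEq Γ G w.1 w'.1) :
    act0 a w = act0 a w' := by
  by_cases hf : Front Γ G v w.1
  · have hf' : Front Γ G v w'.1 := by
      obtain ⟨p, hp⟩ := hf
      exact ⟨p, h.symm.trans hp⟩
    obtain ⟨hb, ht⟩ := SEq.front_unique (front_spec hf) (h.trans (front_spec hf'))
    rw [act0, act0, dif_pos hf, dif_pos hf']
    by_cases hab : a * frontB hf = 1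
    · rw [dif_pos hab, dif_pos (by rw [← hb]; exact hab)]
      exact RWmk_eq ht
    · rw [dif_neg hab, dif_neg (by rw [← hb]; exact hab)]
      exact RWmk_eq (by rw [← hb]; exact ht.cons _)
  · have hf' : ¬ Front Γ G v w'.1 := by
      rintro ⟨p, hp⟩
      exact hf ⟨p, h.trans hp⟩
    rw [act0, act0, dif_neg hf, dif_neg hf']
    by_cases ha : a = 1
    · rw [dif_pos ha, dif_pos ha]
      exact RWmk_eq h
    · rw [dif_neg ha, dif_neg ha]
      exact RWmk_eq (h.cons _)

noncomputable def act {v : V} (a : G v) : RW Γ G → RW Γ G :=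
  Quotient.lift (act0 a) (fun _ _ h => act0_welldef a h)

theorem act_front_merge {v : V} {w : List (Σ v, G v)} (hw : Red Γ G w) {b : G v}
    {t : List (Σ v, G v)} (hf : SEq Γ G w (⟨v, b⟩ :: t)) {a : G v} (hab : a * b = 1)
    (ht : Red Γ G t) : act a (RWmk w hw) = RWmk t ht := by
  show act0 a ⟨w, hw⟩ = _
  have h : Front Γ G v w := ⟨(b, t), hf⟩
  obtain ⟨hb, htt⟩ := SEq.front_unique (front_spec h) hf
  delta act0
  rw [dif_pos h, dif_pos (by rw [hb]; exact hab)]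
  exact RWmk_eq htt

theorem act_front_keep {v : V} {w : List (Σ v, G v)} (hw : Red Γ G w) {b : G v}
    {t : List (Σ v, G v)} (hf : SEq Γ G w (⟨v, b⟩ :: t)) {a : G v} (hab : a * b ≠ 1)
    (h2 : Red Γ G (⟨v, a * b⟩ :: t)) : act a (RWmk w hw) = RWmk (⟨v, a * b⟩ :: t) h2 := by
  show act0 a ⟨w, hw⟩ = _
  have h : Front Γ G v w := ⟨(b, t), hf⟩
  obtain ⟨hb, htt⟩ := SEq.front_unique (front_spec h) hf
  delta act0
  rw [dif_pos h, dif_neg (by rw [hb]; exact hab)]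
  exact RWmk_eq (by rw [hb]; exact htt.cons _)

theorem act_nofront_one {v : V} {w : List (Σ v, G v)} (hw : Red Γ G w)
    (hnf : ¬ Front Γ G v w) : act (1 : G v) (RWmk w hw) = RWmk w hw := by
  show act0 (1 : G v) ⟨w, hw⟩ = _
  delta act0
  rw [dif_neg hnf]
  exact dif_pos rfl

theorem act_nofront_cons {v : V} {w : List (Σ v, G v)} (hw : Red Γ G w)
    (hnf : ¬ Front Γ G v w) {a : G v} (ha : a ≠ 1) (h2 : Red Γ G (⟨v, a⟩ :: w)) :
    act a (RWmk w hw) = RWmk (⟨v, a⟩ :: w) h2 := by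
  show act0 a ⟨w, hw⟩ = _
  delta act0
  rw [dif_neg hnf, dif_neg ha]

end GPAct

section GPAct2
set_option linter.unusedSectionVars false
open Relation List

attribute [local instance] Classical.propDecidable

variable {V : Type*} {Γ : SimpleGraph V} {G : V → Type*} [∀ v, Group (G v)]

theorem Red.cons_no_front' {v : V} {a : G v} {w : List (Σ v, G v)} (hw : Red Γ G w)
    (hnf : ¬ Front Γ G v w) (ha : a ≠ 1) : Red Γ G (⟨v, a⟩ :: w) :=
  hw.cons_no_front (fun ⟨b, t, hs⟩ => hnf ⟨(b, t), hs⟩) ha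

theorem act_one {v : V} (x : RW Γ G) : act (1 : G v) x = x := by
  obtain ⟨⟨w, hw⟩, rfl⟩ := x.exists_rep
  show act (1 : G v) (RWmk w hw) = RWmk w hw
  by_cases hf : Front Γ G v w
  · obtain ⟨⟨c, t⟩, hft⟩ := hf
    have hct : Red Γ G (⟨v, c⟩ :: t) := Red.of_seq hft hw
    have hc : c ≠ 1 := hct.1 ⟨v, c⟩ (by simp)
    have h1c : (1 : G v) * c ≠ 1 := by simpa using hc
    rw [act_front_keep hw hft h1c (red_front_cons hct h1c)]
    refine RWmk_eq ?_
    rw [one_mul]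
    exact hft.symm
  · exact act_nofront_one hw hf

theorem act_mul {v : V} (a b : G v) (x : RW Γ G) :
    act a (act b x) = act (a * b) x := by
  obtain ⟨⟨w, hw⟩, rfl⟩ := x.exists_rep
  show act a (act b (RWmk w hw)) = act (a * b) (RWmk w hw)
  by_cases hf : Front Γ G v w
  · obtain ⟨⟨c, t⟩, hft⟩ := hf
    have hct : Red Γ G (⟨v, c⟩ :: t) := Red.of_seq hft hw
    have ht : Red Γ G t := hct.tail
    have hnt : ¬ Front Γ G v t := no_front_of_red_cons hct
    by_cases hbc : b * c = 1
    · rw [act_front_merge hw hft hbc ht]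
      by_cases ha1 : a = 1
      · subst ha1
        rw [act_nofront_one ht hnt,
          act_front_merge hw hft (by rw [mul_assoc, hbc, mul_one]) ht]
      · have habc : (a * b) * c ≠ 1 := by
          rw [mul_assoc, hbc, mul_one]; exact ha1
        rw [act_nofront_cons ht hnt ha1 (red_front_cons hct ha1),
          act_front_keep hw hft habc (red_front_cons hct habc)]
        refine RWmk_eq ?_
        rw [mul_assoc, hbc, mul_one]
        exact SEq.refl _
    · have hbct : Red Γ G (⟨v, b * c⟩ :: t) := red_front_cons hct hbc
      rw [act_front_keep hw hft hbc hbct]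
      by_cases habc : a * (b * c) = 1
      · rw [act_front_merge hbct (SEq.refl _) habc ht,
          act_front_merge hw hft (by rwa [mul_assoc]) ht]
      · have habc' : (a * b) * c ≠ 1 := by rwa [mul_assoc]
        rw [act_front_keep hbct (SEq.refl _) habc (red_front_cons hct (by rwa [← mul_assoc])),
          act_front_keep hw hft habc' (red_front_cons hct habc')]
        refine RWmk_eq ?_
        rw [mul_assoc]
        exact SEq.refl _
  · by_cases hb1 : b = 1
    · subst hb1
      rw [act_nofront_one hw hf, mul_one]
    · have hbw : Red Γ G (⟨v, b⟩ :: w) :=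
        Red.cons_no_front hw (fun ⟨d, t, hs⟩ => hf ⟨(d, t), hs⟩) hb1
      rw [act_nofront_cons hw hf hb1 hbw]
      by_cases hab1 : a * b = 1
      · rw [act_front_merge hbw (SEq.refl _) hab1 hw, hab1, act_nofront_one hw hf]
      · rw [act_front_keep hbw (SEq.refl _) hab1 (red_front_cons hbw hab1),
          act_nofront_cons hw hf hab1 (red_front_cons hbw hab1)]

theorem front_pair {u v : V} (hne : u ≠ v) {w : List (Σ v, G v)} {c : G u}
    {s : List (Σ v, G v)} {d : G v} {t : List (Σ v, G v)}
    (h1 : SEq Γ G w (⟨u, c⟩ :: s)) (h2 : SEq Γ G w (⟨v, d⟩ :: t)) :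
    ∃ e, SEq Γ G s (⟨v, d⟩ :: e) ∧ SEq Γ G t (⟨u, c⟩ :: e) := by
  have hpe : PEq Γ G (⟨u, c⟩ :: s) (⟨v, d⟩ :: t) := (h1.symm.trans h2).pEq
  obtain ⟨A₁, A₂, hdec, hadj, hrest⟩ := PEq.core hpe
  cases A₁ with
  | nil =>
      exfalso
      rw [List.nil_append, List.cons.injEq] at hdec
      exact hne (congrArg Sigma.fst hdec.1)
  | cons z A₁' =>
      rw [List.cons_append, List.cons.injEq] at hdec
      obtain ⟨rfl, rfl⟩ : (⟨u, c⟩ : Σ v, G v) = z ∧ s = A₁' ++ ⟨v, d⟩ :: A₂ := hdec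
      refine ⟨A₁' ++ A₂, SEq.bubble (fun z hz => (hadj z (by simp [hz])).2) A₂, ?_⟩
      exact hrest.symm.seq

theorem comm_aux_tf {u v : V} (huv : Γ.Adj u v) {a : G u} {b : G v} (ha1 : a ≠ 1)
    (hb1 : b ≠ 1) {w : List (Σ v, G v)} (hw : Red Γ G w) (hfu : Front Γ G u w)
    (hfv : ¬ Front Γ G v w) :
    act a (act b (RWmk w hw)) = act b (act a (RWmk w hw)) := by
  have hne : u ≠ v := huv.ne
  obtain ⟨⟨c, s⟩, h1⟩ := hfu
  have hcs : Red Γ G (⟨u, c⟩ :: s) := Red.of_seq h1 hw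
  have hs : Red Γ G s := hcs.tail
  have hnfv_s : ¬ Front Γ G v s := by
    rintro ⟨⟨d, t'⟩, hst⟩
    apply hfv
    refine ⟨(d, ⟨u, c⟩ :: t'), ?_⟩
    refine (h1.trans (hst.cons _)).trans (SEq.single ⟨[], t', ⟨u, c⟩, ⟨v, d⟩, huv, rfl, rfl⟩)
  have hbw : Red Γ G (⟨v, b⟩ :: w) :=
    Red.cons_no_front' hw hfv hb1
  have hbs : Red Γ G (⟨v, b⟩ :: s) := Red.cons_no_front' hs hnfv_s hb1
  have hswap : SEq Γ G (⟨v, b⟩ :: w) (⟨u, c⟩ :: ⟨v, b⟩ :: s) :=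
    (h1.cons _).trans (SEq.single ⟨[], s, ⟨v, b⟩, ⟨u, c⟩, huv.symm, rfl, rfl⟩)
  rw [act_nofront_cons hw hfv hb1 hbw]
  by_cases hac : a * c = 1
  · rw [act_front_merge hbw hswap hac hbs, act_front_merge hw h1 hac hs,
      act_nofront_cons hs hnfv_s hb1 hbs]
  · have hacs : Red Γ G (⟨u, a * c⟩ :: s) := red_front_cons hcs hac
    have hnfv_acs : ¬ Front Γ G v (⟨u, a * c⟩ :: s) := by
      intro h
      rw [front_cons_iff hne rfl] at h
      exact hnfv_s h.2
    have hcbs : Red Γ G (⟨u, c⟩ :: ⟨v, b⟩ :: s) := Red.of_seq hswap hbw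
    rw [act_front_keep hbw hswap hac (red_front_cons hcbs hac),
      act_front_keep hw h1 hac hacs,
      act_nofront_cons hacs hnfv_acs hb1 (Red.cons_no_front' hacs hnfv_acs hb1)]
    exact RWmk_eq (SEq.single ⟨[], s, ⟨u, a * c⟩, ⟨v, b⟩, huv, rfl, rfl⟩)

theorem act_comm {u v : V} (huv : Γ.Adj u v) (a : G u) (b : G v) (x : RW Γ G) :
    act a (act b x) = act b (act a x) := by
  by_cases ha1 : a = 1
  · subst ha1; rw [act_one, act_one]
  by_cases hb1 : b = 1
  · subst hb1; rw [act_one, act_one]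
  obtain ⟨⟨w, hw⟩, rfl⟩ := x.exists_rep
  show act a (act b (RWmk w hw)) = act b (act a (RWmk w hw))
  have hne : u ≠ v := huv.ne
  by_cases hfu : Front Γ G u w <;> by_cases hfv : Front Γ G v w
  · -- both fronts
    obtain ⟨⟨c, s⟩, h1⟩ := hfu
    obtain ⟨⟨d, t⟩, h2⟩ := hfv
    obtain ⟨e, hse, hte⟩ := front_pair hne h1 h2
    have hwcde : SEq Γ G w (⟨u, c⟩ :: ⟨v, d⟩ :: e) := h1.trans (hse.cons _)
    have hwdce : SEq Γ G w (⟨v, d⟩ :: ⟨u, c⟩ :: e) := h2.trans (hte.cons _)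
    have hcde : Red Γ G (⟨u, c⟩ :: ⟨v, d⟩ :: e) := Red.of_seq hwcde hw
    have hdce : Red Γ G (⟨v, d⟩ :: ⟨u, c⟩ :: e) := Red.of_seq hwdce hw
    have he : Red Γ G e := hcde.tail.tail
    have hce : Red Γ G (⟨u, c⟩ :: e) := hdce.tail
    have hde : Red Γ G (⟨v, d⟩ :: e) := hcde.tail
    have hs' : Red Γ G s := (Red.of_seq h1 hw).tail
    have ht' : Red Γ G t := (Red.of_seq h2 hw).tail
    by_cases hbd : b * d = 1 <;> by_cases hac : a * c = 1
    · -- both merge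
      rw [act_front_merge hw h2 hbd ht', act_front_merge ht' hte hac he,
        act_front_merge hw h1 hac hs', act_front_merge hs' hse hbd he]
    · -- b merges, a keeps
      have hace : Red Γ G (⟨u, a * c⟩ :: e) := red_front_cons hce hac
      have hacde : Red Γ G (⟨u, a * c⟩ :: ⟨v, d⟩ :: e) := red_front_cons hcde hac
      have hacs : SEq Γ G (⟨u, a * c⟩ :: ⟨v, d⟩ :: e) (⟨v, d⟩ :: ⟨u, a * c⟩ :: e) :=
        SEq.single ⟨[], e, ⟨u, a * c⟩, ⟨v, d⟩, huv, rfl, rfl⟩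
      rw [act_front_merge hw h2 hbd ht', act_front_keep ht' hte hac hace,
        act_front_keep hw h1 hac (red_front_cons (Red.of_seq h1 hw) hac),
        act_front_merge (red_front_cons (Red.of_seq h1 hw) hac)
          ((hse.cons _).trans hacs) hbd hace]
    · -- b keeps, a merges
      have hbde : Red Γ G (⟨v, b * d⟩ :: e) := red_front_cons hde hbd
      have hbdce : Red Γ G (⟨v, b * d⟩ :: ⟨u, c⟩ :: e) := red_front_cons hdce hbd
      have hswp : SEq Γ G (⟨v, b * d⟩ :: ⟨u, c⟩ :: e) (⟨u, c⟩ :: ⟨v, b * d⟩ :: e) :=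
        SEq.single ⟨[], e, ⟨v, b * d⟩, ⟨u, c⟩, huv.symm, rfl, rfl⟩
      rw [act_front_keep hw h2 hbd (red_front_cons (Red.of_seq h2 hw) hbd),
        act_front_merge (red_front_cons (Red.of_seq h2 hw) hbd)
          ((hte.cons _).trans hswp) hac hbde,
        act_front_merge hw h1 hac hs', act_front_keep hs' hse hbd hbde]
    · -- both keep
      have hace : Red Γ G (⟨u, a * c⟩ :: e) := red_front_cons hce hac
      have hbde : Red Γ G (⟨v, b * d⟩ :: e) := red_front_cons hde hbd
      have hbdce : Red Γ G (⟨v, b * d⟩ :: ⟨u, c⟩ :: e) := red_front_cons hdce hbd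
      have hacde : Red Γ G (⟨u, a * c⟩ :: ⟨v, d⟩ :: e) := red_front_cons hcde hac
      have hswp : SEq Γ G (⟨v, b * d⟩ :: ⟨u, c⟩ :: e) (⟨u, c⟩ :: ⟨v, b * d⟩ :: e) :=
        SEq.single ⟨[], e, ⟨v, b * d⟩, ⟨u, c⟩, huv.symm, rfl, rfl⟩
      have hswp2 : SEq Γ G (⟨u, a * c⟩ :: ⟨v, d⟩ :: e) (⟨v, d⟩ :: ⟨u, a * c⟩ :: e) :=
        SEq.single ⟨[], e, ⟨u, a * c⟩, ⟨v, d⟩, huv, rfl, rfl⟩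
      have hacbde : Red Γ G (⟨u, a * c⟩ :: ⟨v, b * d⟩ :: e) := by
        refine ⟨?_, NoMerge.relabel (by simp) hcde.2⟩
        intro z hz
        rcases List.mem_cons.mp hz with rfl | hz'
        · exact hac
        rcases List.mem_cons.mp hz' with rfl | hz''
        · exact hbd
        · exact he.1 z hz''
      have hbdace : Red Γ G (⟨v, b * d⟩ :: ⟨u, a * c⟩ :: e) := by
        refine ⟨?_, NoMerge.relabel (by simp) hdce.2⟩
        intro z hz
        rcases List.mem_cons.mp hz with rfl | hz'
        · exact hbd
        rcases List.mem_cons.mp hz' with rfl | hz''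
        · exact hac
        · exact he.1 z hz''
      rw [act_front_keep hw h2 hbd (red_front_cons (Red.of_seq h2 hw) hbd),
        act_front_keep (red_front_cons (Red.of_seq h2 hw) hbd)
          ((hte.cons _).trans hswp) hac hacbde,
        act_front_keep hw h1 hac (red_front_cons (Red.of_seq h1 hw) hac),
        act_front_keep (red_front_cons (Red.of_seq h1 hw) hac)
          ((hse.cons _).trans hswp2) hbd hbdace]
      exact RWmk_eq (SEq.single ⟨[], e, ⟨u, a * c⟩, ⟨v, b * d⟩, huv, rfl, rfl⟩)
  · exact comm_aux_tf huv ha1 hb1 hw hfu hfv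
  · exact (comm_aux_tf huv.symm hb1 ha1 hw hfv hfu).symm
  · -- neither front
    have hbw : Red Γ G (⟨v, b⟩ :: w) :=
      Red.cons_no_front' hw hfv hb1
    have haw : Red Γ G (⟨u, a⟩ :: w) :=
      Red.cons_no_front' hw hfu ha1
    have hnfu_bw : ¬ Front Γ G u (⟨v, b⟩ :: w) := by
      intro h
      rw [front_cons_iff hne.symm rfl] at h
      exact hfu h.2
    have hnfv_aw : ¬ Front Γ G v (⟨u, a⟩ :: w) := by
      intro h
      rw [front_cons_iff hne rfl] at h
      exact hfv h.2
    rw [act_nofront_cons hw hfv hb1 hbw,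
      act_nofront_cons hbw hnfu_bw ha1 (Red.cons_no_front' hbw hnfu_bw ha1),
      act_nofront_cons hw hfu ha1 haw,
      act_nofront_cons haw hnfv_aw hb1 (Red.cons_no_front' haw hnfv_aw hb1)]
    exact RWmk_eq (SEq.single ⟨[], w, ⟨u, a⟩, ⟨v, b⟩, huv, rfl, rfl⟩)

end GPAct2

section GPPhi
set_option linter.unusedSectionVars false
open Relation List

attribute [local instance] Classical.propDecidable

variable {V : Type*} {Γ : SimpleGraph V} {G : V → Type*} [∀ v, Group (G v)]

noncomputable def actPerm (Γ : SimpleGraph V) (G : V → Type*) [∀ v, Group (G v)]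
    (v : V) : G v →* Equiv.Perm (RW Γ G) where
  toFun a :=
    { toFun := act a
      invFun := act a⁻¹
      left_inv := fun x => by rw [act_mul, inv_mul_cancel, act_one]
      right_inv := fun x => by rw [act_mul, mul_inv_cancel, act_one] }
  map_one' := Equiv.ext fun x => act_one x
  map_mul' a b := Equiv.ext fun x => (act_mul a b x).symm

theorem actPerm_apply {v : V} (a : G v) (x : RW Γ G) :
    actPerm Γ G v a x = act a x := rfl

noncomputable def bigPhi (Γ : SimpleGraph V) (G : V → Type*) [∀ v, Group (G v)] :
    GraphProduct Γ G →* Equiv.Perm (RW Γ G) :=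
  QuotientGroup.lift _ (Monoid.CoprodI.lift (actPerm Γ G)) (by
    refine Subgroup.normalClosure_le_normal ?_
    rintro x ⟨u, v, hadj, a, b, rfl⟩
    rw [SetLike.mem_coe, MonoidHom.mem_ker, map_commutatorElement]
    simp only [Monoid.CoprodI.lift_of]
    rw [commutatorElement_eq_one_iff_mul_comm]
    refine Equiv.ext fun x => ?_
    simp only [Equiv.Perm.mul_apply, actPerm_apply]
    exact act_comm hadj a b x)

theorem bigPhi_of {v : V} (a : G v) :
    bigPhi Γ G (GraphProduct.of Γ G a) = actPerm Γ G v a := by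
  show bigPhi Γ G ((QuotientGroup.mk' _).comp Monoid.CoprodI.of a) = _
  rw [MonoidHom.comp_apply, QuotientGroup.mk'_apply]
  show QuotientGroup.lift _ _ _ _ = _
  rw [QuotientGroup.lift_mk']
  exact Monoid.CoprodI.lift_of _ _

theorem phi_eval (w : List (Σ v, G v)) (hw : Red Γ G w) :
    bigPhi Γ G (exprProd Γ G w) (RWmk [] red_nil) = RWmk w hw := by
  induction w with
  | nil =>
      rw [exprProd_nil, map_one]
      rfl
  | cons x t ih =>
      have ht : Red Γ G t := hw.tail
      rw [exprProd_cons, map_mul]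
      simp only [Equiv.Perm.mul_apply]
      rw [ih ht, bigPhi_of, actPerm_apply]
      have hnf : ¬ Front Γ G x.1 t := by
        rintro ⟨⟨d, t'⟩, hst⟩
        refine hw.2 _ ((hst.cons x).trans ?_) ⟨[], x, ⟨x.1, d⟩, t', rfl, rfl⟩
        exact SEq.refl _
      have hx1 : x.2 ≠ 1 := hw.1 x (by simp)
      rw [act_nofront_cons ht hnf hx1 (by rw [Sigma.eta]; exact hw)]

theorem red_unique {w u : List (Σ v, G v)} (hw : Red Γ G w) (hu : Red Γ G u)
    (h : exprProd Γ G w = exprProd Γ G u) : SEq Γ G w u := by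
  have h1 : RWmk w hw = RWmk u hu := by
    rw [← phi_eval w hw, ← phi_eval u hu, h]
  exact RWmk_exact h1

end GPPhi

section GPLen
set_option linter.unusedSectionVars false
open Relation List

attribute [local instance] Classical.propDecidable

variable {V : Type*} {Γ : SimpleGraph V} {G : V → Type*} [∀ v, Group (G v)]

/-- `g` is expressible as a product of generators from `X v`. -/
def XExpr (X : ∀ v, Set (G v)) (v : V) (g : G v) : Prop :=
  ∃ c : List (G v), (∀ x ∈ c, x ∈ X v) ∧ c.prod = g

/-- Minimal length of an `X v`-word for `g`. -/
noncomputable def xlen (X : ∀ v, Set (G v)) (v : V) (g : G v) : ℕ :=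
  sInf {k | ∃ c : List (G v), (∀ x ∈ c, x ∈ X v) ∧ c.prod = g ∧ c.length = k}

theorem xlen_le {X : ∀ v, Set (G v)} {v : V} {g : G v} {c : List (G v)}
    (hc : ∀ x ∈ c, x ∈ X v) (hp : c.prod = g) : xlen X v g ≤ c.length :=
  Nat.sInf_le ⟨c, hc, hp, rfl⟩

theorem xlen_exists {X : ∀ v, Set (G v)} {v : V} {g : G v} (h : XExpr X v g) :
    ∃ c : List (G v), (∀ x ∈ c, x ∈ X v) ∧ c.prod = g ∧ c.length = xlen X v g := by
  obtain ⟨c, hc, hp⟩ := h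
  have : ({k | ∃ c : List (G v), (∀ x ∈ c, x ∈ X v) ∧ c.prod = g ∧ c.length = k}).Nonempty :=
    ⟨c.length, c, hc, hp, rfl⟩
  exact Nat.sInf_mem this

theorem XExpr.mul {X : ∀ v, Set (G v)} {v : V} {a b : G v} (ha : XExpr X v a)
    (hb : XExpr X v b) : XExpr X v (a * b) := by
  obtain ⟨c, hc, hp⟩ := ha
  obtain ⟨d, hd, hq⟩ := hb
  exact ⟨c ++ d, fun x hx => (List.mem_append.mp hx).elim (hc x) (hd x),
    by rw [List.prod_append, hp, hq]⟩

theorem xlen_mul_le {X : ∀ v, Set (G v)} {v : V} {a b : G v} (ha : XExpr X v a)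
    (hb : XExpr X v b) : xlen X v (a * b) ≤ xlen X v a + xlen X v b := by
  obtain ⟨c, hc, hp, hl⟩ := xlen_exists ha
  obtain ⟨d, hd, hq, hm⟩ := xlen_exists hb
  have := xlen_le (c := c ++ d) (fun x hx => (List.mem_append.mp hx).elim (hc x) (hd x))
    (by rw [List.prod_append, hp, hq])
  simpa [hl, hm] using this

/-- Sum of the `X`-lengths of the syllables. -/
noncomputable def FX (X : ∀ v, Set (G v)) (w : List (Σ v, G v)) : ℕ :=
  (w.map fun s => xlen X s.1 s.2).sum

theorem FX_perm {X : ∀ v, Set (G v)} {w u : List (Σ v, G v)} (h : w.Perm u) :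
    FX X w = FX X u := (h.map _).sum_eq

theorem FX_le_length {X : ∀ v, Set (G v)} {w : List (Σ v, G v)} (h : IsXWord X w) :
    FX X w ≤ w.length := by
  induction w with
  | nil => simp [FX]
  | cons x t ih =>
      have h1 : xlen X x.1 x.2 ≤ 1 := xlen_le (c := [x.2]) (by
        intro y hy
        rw [List.mem_singleton] at hy
        subst hy
        exact h x (by simp)) (by simp)
      have h2 := ih (fun s hs => h s (List.mem_cons_of_mem _ hs))
      simp only [FX, List.map_cons, List.sum_cons, List.length_cons]
      simp only [FX] at h2
      omega

theorem exprProd_map_of {v : V} (l : List (G v)) :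
    exprProd Γ G (l.map fun a => (⟨v, a⟩ : Σ v, G v)) = GraphProduct.of Γ G l.prod := by
  rw [(GraphProduct.of Γ G).map_list_prod]
  simp only [exprProd, List.map_map]
  rfl

/-- Reduction of a word with `X`-expressible syllables to a reduced word. -/
theorem reduce_to_red {X : ∀ v, Set (G v)} :
    ∀ (n : ℕ) (w : List (Σ v, G v)), w.length ≤ n → (∀ s ∈ w, XExpr X s.1 s.2) →
    ∃ r, Red Γ G r ∧ exprProd Γ G r = exprProd Γ G w ∧ FX X r ≤ FX X w ∧
      (∀ s ∈ r, XExpr X s.1 s.2) := by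
  intro n
  induction n with
  | zero =>
      intro w hl hex
      rw [Nat.le_zero, List.length_eq_zero_iff] at hl
      subst hl
      exact ⟨[], red_nil, rfl, le_refl _, by simp⟩
  | succ n ih =>
      intro w hl hex
      by_cases htriv : ∃ s ∈ w, s.2 = (1 : G s.1)
      · obtain ⟨s, hs, hs1⟩ := htriv
        obtain ⟨p, q, rfl⟩ := List.append_of_mem hs
        have hlen : (p ++ q).length ≤ n := by
          have := hl
          simp only [List.length_append, List.length_cons] at this ⊢
          omega
        obtain ⟨r, hr, hprod, hF, hre⟩ := ih (p ++ q)
          hlen (fun t ht => hex t (by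
            rcases List.mem_append.mp ht with h' | h'
            · exact List.mem_append.mpr (Or.inl h')
            · exact List.mem_append.mpr (Or.inr (List.mem_cons_of_mem _ h'))))
        refine ⟨r, hr, ?_, ?_, hre⟩
        · rw [hprod]
          simp only [exprProd_append, exprProd_cons]
          rw [hs1, map_one, one_mul]
        · refine le_trans hF ?_
          simp only [FX, List.map_append, List.sum_append, List.map_cons, List.sum_cons]
          omega
      · by_cases hmerge : ∃ u, SEq Γ G w u ∧ HasPair u
        · obtain ⟨u, hsequ, p, s, t, q, rfl, hst⟩ := hmerge
          obtain ⟨sv, sa⟩ := s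
          obtain ⟨tv, ta⟩ := t
          have : sv = tv := hst
          subst this
          have hexu : ∀ z ∈ p ++ ⟨sv, sa⟩ :: ⟨sv, ta⟩ :: q, XExpr X z.1 z.2 :=
            fun z hz => hex z (hsequ.perm.symm.subset hz)
          have hexa : XExpr X sv sa := hexu ⟨sv, sa⟩ (by simp)
          have hexta : XExpr X sv ta := hexu ⟨sv, ta⟩ (by simp)
          have hlen : (p ++ ⟨sv, sa * ta⟩ :: q).length ≤ n := by
            have h1 := hsequ.perm.length_eq
            simp only [List.length_append, List.length_cons] at h1 ⊢
            omega
          obtain ⟨r, hr, hprod, hF, hre⟩ := ih (p ++ ⟨sv, sa * ta⟩ :: q) hlen (by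
            intro z hz
            rcases List.mem_append.mp hz with h' | h'
            · exact hexu z (by simp [h'])
            rcases List.mem_cons.mp h' with rfl | h''
            · exact hexa.mul hexta
            · exact hexu z (by simp [h'']))
          refine ⟨r, hr, ?_, ?_, hre⟩
          · rw [hprod, hsequ.exprProd_eq]
            simp only [exprProd_append, exprProd_cons]
            rw [map_mul, mul_assoc]
          · refine le_trans hF ?_
            have heq : FX X w = FX X (p ++ ⟨sv, sa⟩ :: ⟨sv, ta⟩ :: q) := FX_perm hsequ.perm
            rw [heq]
            simp only [FX, List.map_append, List.sum_append, List.map_cons, List.sum_cons]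
            have := xlen_mul_le hexa hexta
            omega
        · push_neg at htriv
          refine ⟨w, ⟨htriv, ?_⟩, rfl, le_refl _, hex⟩
          intro u hu hp
          exact hmerge ⟨u, hu, hp⟩

/-- Lower bound: any `X`-word representing the same element as a reduced word `r`
is at least as long as the total `X`-length of `r`. -/
theorem red_lower_bound {X : ∀ v, Set (G v)} {r w' : List (Σ v, G v)} (hr : Red Γ G r)
    (hw' : IsXWord X w') (h : exprProd Γ G w' = exprProd Γ G r) :
    FX X r ≤ w'.length := by
  have hex : ∀ s ∈ w', XExpr X s.1 s.2 := fun s hs => ⟨[s.2], by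
    intro x hx
    rw [List.mem_singleton] at hx
    subst hx
    exact hw' s hs, by simp⟩
  obtain ⟨r', hr', hprod, hF, _⟩ := reduce_to_red w'.length w' (le_refl _) hex
  have hseq : SEq Γ G r' r := red_unique hr' hr (hprod.trans h)
  calc FX X r = FX X r' := FX_perm hseq.perm.symm
    _ ≤ FX X w' := hF
    _ ≤ w'.length := FX_le_length hw'

end GPLen

section GPFinal
set_option linter.unusedSectionVars false
open Relation List

attribute [local instance] Classical.propDecidable

variable {V : Type*} {Γ : SimpleGraph V} {G : V → Type*} [∀ v, Group (G v)]

/-- Flatten a grouped word into a word of letters. -/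
def flattenG (W : List (Σ v, List (G v))) : List (Σ v, G v) :=
  (W.map fun g => g.2.map fun a => (⟨g.1, a⟩ : Σ v, G v)).flatten

/-- Syllable word of a grouped word. -/
def sylG (W : List (Σ v, List (G v))) : List (Σ v, G v) :=
  W.map fun g => ⟨g.1, g.2.prod⟩

theorem flattenG_nil : flattenG ([] : List (Σ v, List (G v))) = [] := rfl

theorem flattenG_cons (g : Σ v, List (G v)) (W : List (Σ v, List (G v))) :
    flattenG (g :: W) = (g.2.map fun a => (⟨g.1, a⟩ : Σ v, G v)) ++ flattenG W := by
  simp [flattenG]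

theorem flattenG_append (A B : List (Σ v, List (G v))) :
    flattenG (A ++ B) = flattenG A ++ flattenG B := by
  simp [flattenG]

theorem exprProd_flattenG (W : List (Σ v, List (G v))) :
    exprProd Γ G (flattenG W) = exprProd Γ G (sylG W) := by
  induction W with
  | nil => rfl
  | cons g W ih =>
      rw [flattenG_cons, exprProd_append, ih]
      show _ = exprProd Γ G (⟨g.1, g.2.prod⟩ :: sylG W)
      rw [exprProd_cons, exprProd_map_of]

theorem SEq.blockswap {l m : List (Σ v, G v)}
    (h : ∀ a ∈ l, ∀ b ∈ m, Γ.Adj a.1 b.1) (A B : List (Σ v, G v)) :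
    SEq Γ G (A ++ (l ++ (m ++ B))) (A ++ (m ++ (l ++ B))) := by
  induction l generalizing A with
  | nil => exact SEq.refl _
  | cons x l' ih =>
      have step1 : SEq Γ G ((A ++ [x]) ++ (l' ++ (m ++ B))) ((A ++ [x]) ++ (m ++ (l' ++ B))) :=
        ih (fun a ha => h a (List.mem_cons_of_mem _ ha)) (A ++ [x])
      have step2 : SEq Γ G (m ++ (x :: (l' ++ B))) (x :: (m ++ (l' ++ B))) :=
        SEq.bubble (fun z hz => (h x (by simp) z hz).symm) _
      have step2' : SEq Γ G (A ++ (m ++ (x :: (l' ++ B)))) (A ++ (x :: (m ++ (l' ++ B)))) :=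
        step2.append_left A
      have e1 : (A ++ [x]) ++ (l' ++ (m ++ B)) = A ++ ((x :: l') ++ (m ++ B)) := by simp
      have e2 : (A ++ [x]) ++ (m ++ (l' ++ B)) = A ++ (x :: (m ++ (l' ++ B))) := by simp
      rw [e1, e2] at step1
      exact step1.trans (step2'.symm.trans (SEq.refl _))

theorem lift_seq {W : List (Σ v, List (G v))} :
    ∀ u, SEq Γ G (sylG W) u →
    ∃ W', W.Perm W' ∧ SEq Γ G (flattenG W) (flattenG W') ∧ sylG W' = u := by
  intro u h
  induction h with
  | refl => exact ⟨W, List.Perm.refl _, SEq.refl _, rfl⟩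
  | tail hseq hstep ih =>
      obtain ⟨W', hperm, hflat, hsyl⟩ := ih
      obtain ⟨p, q, s, t, hadj, h1, h2⟩ := hstep
      subst h2
      rw [h1] at hsyl
      simp only [sylG] at hsyl
      rw [List.map_eq_append_iff] at hsyl
      obtain ⟨l₁, l₂, rfl, hl₁, hl₂⟩ := hsyl
      rw [List.map_eq_cons_iff] at hl₂
      obtain ⟨gs, l₃, rfl, hgs, hl₃⟩ := hl₂
      rw [List.map_eq_cons_iff] at hl₃
      obtain ⟨gt, Q, rfl, hgt, hQ⟩ := hl₃
      have hadj' : Γ.Adj gs.1 gt.1 := by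
        rwa [← congrArg Sigma.fst hgs, ← congrArg Sigma.fst hgt] at hadj
      refine ⟨l₁ ++ gt :: gs :: Q, ?_, ?_, ?_⟩
      · exact hperm.trans (List.Perm.append_left _ (List.Perm.swap' _ _ (List.Perm.refl _)))
      · refine hflat.trans ?_
        rw [flattenG_append, flattenG_cons, flattenG_cons,
          flattenG_append, flattenG_cons, flattenG_cons]
        have := SEq.blockswap (Γ := Γ) (G := G)
          (l := gs.2.map fun a => (⟨gs.1, a⟩ : Σ v, G v))
          (m := gt.2.map fun a => (⟨gt.1, a⟩ : Σ v, G v))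
          (by
            intro a ha b hb
            simp only [List.mem_map] at ha hb
            obtain ⟨a', _, rfl⟩ := ha
            obtain ⟨b', _, rfl⟩ := hb
            exact hadj') (flattenG l₁) (flattenG Q)
        simpa [List.append_assoc] using this
      · simp only [sylG, List.map_append, List.map_cons]
        rw [hl₁, hgs, hgt, hQ]

theorem flattenG_singletons (w : List (Σ v, G v)) :
    flattenG (w.map fun s => (⟨s.1, [s.2]⟩ : Σ v, List (G v))) = w := by
  induction w with
  | nil => rfl
  | cons x t ih =>
      rw [List.map_cons, flattenG_cons, ih]
      rfl

end GPFinal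

section GPMain
set_option linter.unusedSectionVars false
open Relation List

attribute [local instance] Classical.propDecidable

variable {V : Type*} {Γ : SimpleGraph V} {G : V → Type*} [∀ v, Group (G v)]

def Shortenable (Γ : SimpleGraph V) (G : V → Type*) [∀ v, Group (G v)]
    (X : ∀ v, Set (G v)) (w : List (Σ v, G v)) : Prop :=
  ∃ (w₁ p q : List (Σ v, G v)) (v : V) (mv mv' : List (G v)),
    Relation.ReflTransGen (ShuffleStep Γ G) w w₁ ∧
    w₁ = p ++ mv.map (fun a => (⟨v, a⟩ : Σ v, G v)) ++ q ∧
    (∀ a ∈ mv', a ∈ X v) ∧ mv'.prod = mv.prod ∧ mv'.length < mv.length ∧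
    exprProd Γ G (p ++ mv'.map (fun a => (⟨v, a⟩ : Σ v, G v)) ++ q) = exprProd Γ G w

theorem Shortenable.of_seq {X : ∀ v, Set (G v)} {w u : List (Σ v, G v)}
    (h : SEq Γ G w u) (hs : Shortenable Γ G X u) : Shortenable Γ G X w := by
  obtain ⟨w₁, p, q, v, mv, mv', h1, h2, h3, h4, h5, h6⟩ := hs
  exact ⟨w₁, p, q, v, mv, mv', h.trans h1, h2, h3, h4, h5, h6.trans h.exprProd_eq.symm⟩

theorem FX_sylG_eq {X : ∀ v, Set (G v)} :
    ∀ W : List (Σ v, List (G v)), (∀ g ∈ W, xlen X g.1 g.2.prod = g.2.length) →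
    FX X (sylG W) = (flattenG W).length := by
  intro W h
  induction W with
  | nil => rfl
  | cons g T ih =>
      have h1 := h g (by simp)
      have h2 := ih (fun g' hg' => h g' (by simp [hg']))
      simp only [sylG, FX, flattenG_cons, List.map_cons, List.sum_cons,
        List.length_append, List.length_map] at h2 ⊢
      omega

theorem auxMain {X : ∀ v, Set (G v)} :
    ∀ (n : ℕ) (W : List (Σ v, List (G v))), W.length ≤ n →
    (∀ g ∈ W, (∀ a ∈ g.2, a ∈ X g.1) ∧ g.2 ≠ []) →
    (∃ w' : List (Σ v, G v), IsXWord X w' ∧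
      exprProd Γ G w' = exprProd Γ G (flattenG W) ∧ w'.length < (flattenG W).length) →
    Shortenable Γ G X (flattenG W) := by
  intro n
  induction n with
  | zero =>
      intro W hl hinv hng
      rw [Nat.le_zero, List.length_eq_zero_iff] at hl
      subst hl
      obtain ⟨w', _, _, hlt⟩ := hng
      simp [flattenG] at hlt
  | succ n ih =>
      intro W hl hinv hng
      by_cases hshort : ∃ g ∈ W, ∃ c : List (G g.1), (∀ a ∈ c, a ∈ X g.1) ∧
          c.prod = g.2.prod ∧ c.length < g.2.length
      · obtain ⟨g, hg, c, hc1, hc2, hc3⟩ := hshort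
        obtain ⟨P, Q, rfl⟩ := List.append_of_mem hg
        refine ⟨flattenG (P ++ g :: Q), flattenG P, flattenG Q, g.1, g.2, c,
          Relation.ReflTransGen.refl, ?_, hc1, hc2, hc3, ?_⟩
        · rw [flattenG_append, flattenG_cons, ← List.append_assoc]
        · simp only [flattenG_append, flattenG_cons, exprProd_append, exprProd_map_of,
            hc2, mul_assoc]
      · by_cases hmerge : ∃ u, SEq Γ G (sylG W) u ∧ HasPair u
        · obtain ⟨u, hsequ, p, s, t, q, rfl, hst⟩ := hmerge
          obtain ⟨W', hperm, hflat, hsyl⟩ := lift_seq _ hsequ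
          simp only [sylG] at hsyl
          rw [List.map_eq_append_iff] at hsyl
          obtain ⟨l₁, l₂, rfl, hl₁, hl₂⟩ := hsyl
          rw [List.map_eq_cons_iff] at hl₂
          obtain ⟨gs, l₃, rfl, hgs, hl₃⟩ := hl₂
          rw [List.map_eq_cons_iff] at hl₃
          obtain ⟨gt, Q, rfl, hgt, hQ⟩ := hl₃
          obtain ⟨v1, la⟩ := gs
          obtain ⟨v2, lb⟩ := gt
          have hv : v2 = v1 := by
            have e1 : v1 = s.1 := congrArg Sigma.fst hgs
            have e2 : v2 = t.1 := congrArg Sigma.fst hgt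
            rw [e1, e2, hst]
          subst hv
          have hfl2 : flattenG (l₁ ++ (⟨v2, la ++ lb⟩ : Σ v, List (G v)) :: Q)
              = flattenG (l₁ ++ ⟨v2, la⟩ :: ⟨v2, lb⟩ :: Q) := by
            simp [flattenG_append, flattenG_cons, List.append_assoc]
          have hseqflat : SEq Γ G (flattenG W)
              (flattenG (l₁ ++ (⟨v2, la ++ lb⟩ : Σ v, List (G v)) :: Q)) := by
            rw [hfl2]
            exact hflat
          have hmemW' : ∀ g ∈ l₁ ++ (⟨v2, la⟩ : Σ v, List (G v)) :: ⟨v2, lb⟩ :: Q,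
              (∀ a ∈ g.2, a ∈ X g.1) ∧ g.2 ≠ [] :=
            fun g hgm => hinv g (hperm.symm.subset hgm)
          have hinv' : ∀ g ∈ l₁ ++ (⟨v2, la ++ lb⟩ : Σ v, List (G v)) :: Q,
              (∀ a ∈ g.2, a ∈ X g.1) ∧ g.2 ≠ [] := by
            intro g hgm
            rcases List.mem_append.mp hgm with h' | h'
            · exact hmemW' g (List.mem_append.mpr (Or.inl h'))
            rcases List.mem_cons.mp h' with rfl | h''
            · constructor
              · intro a ha
                rcases List.mem_append.mp ha with ha' | ha'
                · exact (hmemW' ⟨v2, la⟩ (by simp)).1 a ha'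
                · exact (hmemW' ⟨v2, lb⟩ (by simp)).1 a ha'
              · have := (hmemW' ⟨v2, la⟩ (by simp)).2
                simp only [ne_eq, List.append_eq_nil_iff]
                tauto
            · exact hmemW' g (by simp [h''])
          have hlen' : (l₁ ++ (⟨v2, la ++ lb⟩ : Σ v, List (G v)) :: Q).length ≤ n := by
            have hpl := hperm.length_eq
            simp only [List.length_append, List.length_cons] at hpl ⊢
            omega
          have hng' : ∃ w' : List (Σ v, G v), IsXWord X w' ∧
              exprProd Γ G w' = exprProd Γ G (flattenG (l₁ ++ (⟨v2, la ++ lb⟩ : Σ v, List (G v)) :: Q)) ∧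
              w'.length < (flattenG (l₁ ++ (⟨v2, la ++ lb⟩ : Σ v, List (G v)) :: Q)).length := by
            obtain ⟨w', hx, hpr, hlt⟩ := hng
            refine ⟨w', hx, ?_, ?_⟩
            · rw [hpr, hseqflat.exprProd_eq]
            · rwa [← hseqflat.perm.length_eq]
          exact Shortenable.of_seq hseqflat (ih _ hlen' hinv' hng')
        · exfalso
          push_neg at hshort
          have hred : Red Γ G (sylG W) := by
            constructor
            · intro s hs
              simp only [sylG, List.mem_map] at hs
              obtain ⟨g, hgW, rfl⟩ := hs
              intro hone
              have h1 := hshort g hgW [] (by simp) (by simpa using hone.symm)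
              have h2 := (hinv g hgW).2
              simp only [List.length_nil, Nat.not_lt, Nat.le_zero, List.length_eq_zero_iff] at h1
              exact h2 h1
            · intro u hu hp
              exact hmerge ⟨u, hu, hp⟩
          obtain ⟨w', hxw', hprod', hlt⟩ := hng
          have hlb : FX X (sylG W) ≤ w'.length :=
            red_lower_bound hred hxw' (hprod'.trans (exprProd_flattenG W))
          have hFeq : FX X (sylG W) = (flattenG W).length := by
            refine FX_sylG_eq W ?_
            intro g hgW
            refine le_antisymm (xlen_le (hinv g hgW).1 rfl) ?_
            obtain ⟨c, hc1, hc2, hc3⟩ := xlen_exists (g := g.2.prod) ⟨g.2, (hinv g hgW).1, rfl⟩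
            have := hshort g hgW c hc1 hc2
            omega
          omega
end GPMain

/-- A non-geodesic word over `X` can be shortened by a sequence of shuffles followed by
replacing a subword over some `X v` by a shorter word over `X v` equal to it in `G v`. -/
theorem stmt18 {V : Type*} (Γ : SimpleGraph V) (G : V → Type*) [∀ v, Group (G v)]
    (X : ∀ v, Set (G v))
    (hXgen : ∀ v, Subgroup.closure (X v) = ⊤)
    (w : List (Σ v, G v)) (hw : IsXWord X w)
    (hng : ∃ w' : List (Σ v, G v), IsXWord X w' ∧
      exprProd Γ G w' = exprProd Γ G w ∧ w'.length < w.length) :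
    ∃ (w₁ p q : List (Σ v, G v)) (v : V) (mv mv' : List (G v)),
      Relation.ReflTransGen (ShuffleStep Γ G) w w₁ ∧
      w₁ = p ++ mv.map (fun a => (⟨v, a⟩ : Σ v, G v)) ++ q ∧
      (∀ a ∈ mv', a ∈ X v) ∧ mv'.prod = mv.prod ∧ mv'.length < mv.length ∧
      exprProd Γ G (p ++ mv'.map (fun a => (⟨v, a⟩ : Σ v, G v)) ++ q) = exprProd Γ G w := by
  classical
  have hfl : flattenG (w.map fun s => (⟨s.1, [s.2]⟩ : Σ v, List (G v))) = w :=
    flattenG_singletons w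
  have hinv : ∀ g ∈ w.map (fun s => (⟨s.1, [s.2]⟩ : Σ v, List (G v))),
      (∀ a ∈ g.2, a ∈ X g.1) ∧ g.2 ≠ [] := by
    intro g hgm
    simp only [List.mem_map] at hgm
    obtain ⟨s, hs, rfl⟩ := hgm
    refine ⟨?_, by simp⟩
    intro a ha
    rw [List.mem_singleton] at ha
    subst ha
    exact hw s hs
  have h := auxMain (Γ := Γ) (G := G) (X := X) _ _ (le_refl _) hinv (by rw [hfl]; exact hng)
  rw [hfl] at h
  exact h
end

section
/- Let Γ be the cycle of length n ≥ 5 and let Y be the 2-complex whose vertices are the subsets S ⊆ ℤ/nℤ, with an edge between S and S ∪ {i} for each i ∉ S, and a square 2-cell on {S, S∪{i}, S∪{j}, S∪{i,j}} whenever i, j ∉ S and i, j are adjacent in the cycle. Then Y is a closed orientable surface with Euler characteristic (4−n)·2^{n−2}, hence of genus 1 + (n−4)·2^{n−3}. -/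
/-- Vertices of the cube complex `Y`: subsets of `ZMod n`. -/
abbrev CubeVertex (n : ℕ) := Finset (ZMod n)

/-- Edges of `Y`: a pair `(S, k)` with `k ∉ S`, joining `S` and `insert k S`. -/
def CubeEdge (n : ℕ) := {p : Finset (ZMod n) × ZMod n // p.2 ∉ p.1}

/-- Square faces of `Y`: a pair `(S, i)` with `i ∉ S` and `i+1 ∉ S`, representing the
square on `{S, S∪{i}, S∪{i+1}, S∪{i,i+1}}` in the two cyclically adjacent directions
`i` and `i+1`. -/
def CubeFace (n : ℕ) := {q : Finset (ZMod n) × ZMod n // q.2 ∉ q.1 ∧ q.2 + 1 ∉ q.1}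


instance (n : ℕ) [NeZero n] : Fintype (CubeEdge n) := by
  unfold CubeEdge; infer_instance

instance (n : ℕ) [NeZero n] : Fintype (CubeFace n) := by
  unfold CubeFace; infer_instance

/-- The (unoriented) edge `e` lies on the boundary of the square `f`. -/
def edgeInFace {n : ℕ} (e : CubeEdge n) (f : CubeFace n) : Prop :=
  e.1 = (f.1.1, f.1.2) ∨ e.1 = (f.1.1, f.1.2 + 1) ∨
    e.1 = (insert f.1.2 f.1.1, f.1.2 + 1) ∨ e.1 = (insert (f.1.2 + 1) f.1.1, f.1.2)

/-- `S` is a corner of the square `f`. -/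
def isCorner {n : ℕ} (S : Finset (ZMod n)) (f : CubeFace n) : Prop :=
  S = f.1.1 ∨ S = insert f.1.2 f.1.1 ∨ S = insert (f.1.2 + 1) f.1.1 ∨
    S = insert f.1.2 (insert (f.1.2 + 1) f.1.1)

/-- Two directions `k`, `k'` are adjacent in the link of the vertex `S` if some square
with corner `S` uses exactly the directions `k` and `k'`. -/
def linkAdj {n : ℕ} (S : Finset (ZMod n)) (k k' : ZMod n) : Prop :=
  ∃ f : CubeFace n, isCorner S f ∧
    ((k = f.1.2 ∧ k' = f.1.2 + 1) ∨ (k' = f.1.2 ∧ k = f.1.2 + 1))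

/-- The oriented boundary of the square `f`, as a list of directed edges; `b` selects one
of the two orientations. -/
def orientedBoundary {n : ℕ} (f : CubeFace n) (b : Bool) :
    List (Finset (ZMod n) × Finset (ZMod n)) :=
  let S := f.1.1; let i := f.1.2
  if b then
    [(S, insert i S), (insert i S, insert (i + 1) (insert i S)),
      (insert (i + 1) (insert i S), insert (i + 1) S), (insert (i + 1) S, S)]
  else
    [(insert i S, S), (insert (i + 1) (insert i S), insert i S),
      (insert (i + 1) S, insert (i + 1) (insert i S)), (S, insert (i + 1) S)]

/-- Adjacency of vertices of the cube complex: they differ by inserting one element. -/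
def cubeVertexAdj {n : ℕ} (A B : Finset (ZMod n)) : Prop :=
  ∃ k : ZMod n, (k ∉ A ∧ B = insert k A) ∨ (k ∉ B ∧ A = insert k B)



namespace Stmt19Aux

variable {n : ℕ}

/-- Face on the `(k, k+1)` side of edge `(S,k)`. -/
def faceA (e : CubeEdge n) : CubeFace n :=
  if h : e.1.2 + 1 ∈ e.1.1 then
    ⟨(e.1.1.erase (e.1.2 + 1), e.1.2),
      fun hk => e.2 (Finset.mem_of_mem_erase hk), Finset.notMem_erase _ _⟩
  else ⟨(e.1.1, e.1.2), e.2, h⟩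

/-- Face on the `(k-1, k)` side of edge `(S,k)`. -/
def faceB (e : CubeEdge n) : CubeFace n :=
  if h : e.1.2 - 1 ∈ e.1.1 then
    ⟨(e.1.1.erase (e.1.2 - 1), e.1.2 - 1), Finset.notMem_erase _ _,
      by rw [sub_add_cancel]; exact fun hk => e.2 (Finset.mem_of_mem_erase hk)⟩
  else ⟨(e.1.1, e.1.2 - 1), h, by rw [sub_add_cancel]; exact e.2⟩

lemma faceA_pos (e : CubeEdge n) (h : e.1.2 + 1 ∈ e.1.1) : faceA e =
    ⟨(e.1.1.erase (e.1.2 + 1), e.1.2),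
      fun hk => e.2 (Finset.mem_of_mem_erase hk), Finset.notMem_erase _ _⟩ := by
  unfold faceA; exact dif_pos h

lemma faceA_neg (e : CubeEdge n) (h : e.1.2 + 1 ∉ e.1.1) : faceA e =
    ⟨(e.1.1, e.1.2), e.2, h⟩ := by
  unfold faceA; exact dif_neg h

lemma faceB_pos (e : CubeEdge n) (h : e.1.2 - 1 ∈ e.1.1) : faceB e =
    ⟨(e.1.1.erase (e.1.2 - 1), e.1.2 - 1), Finset.notMem_erase _ _,
      by rw [sub_add_cancel]; exact fun hk => e.2 (Finset.mem_of_mem_erase hk)⟩ := by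
  unfold faceB; exact dif_pos h

lemma faceB_neg (e : CubeEdge n) (h : e.1.2 - 1 ∉ e.1.1) : faceB e =
    ⟨(e.1.1, e.1.2 - 1), h, by rw [sub_add_cancel]; exact e.2⟩ := by
  unfold faceB; exact dif_neg h

lemma faceA_snd (e : CubeEdge n) : (faceA e).1.2 = e.1.2 := by
  by_cases h : e.1.2 + 1 ∈ e.1.1
  · rw [faceA_pos e h]
  · rw [faceA_neg e h]

lemma faceB_snd (e : CubeEdge n) : (faceB e).1.2 = e.1.2 - 1 := by
  by_cases h : e.1.2 - 1 ∈ e.1.1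
  · rw [faceB_pos e h]
  · rw [faceB_neg e h]

lemma faceA_ne_faceB (h1 : (1 : ZMod n) ≠ 0) (e : CubeEdge n) : faceA e ≠ faceB e := by
  intro h
  have : (faceA e).1.2 = (faceB e).1.2 := by rw [h]
  rw [faceA_snd, faceB_snd] at this
  exact h1 (by linear_combination this)

lemma edge_in_faceA (e : CubeEdge n) : edgeInFace e (faceA e) := by
  by_cases h : e.1.2 + 1 ∈ e.1.1
  · right; right; right
    show e.1 = _
    rw [faceA_pos _ h]
    simp [Finset.insert_erase h]
  · left
    show e.1 = _
    rw [faceA_neg _ h]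

lemma edge_in_faceB (e : CubeEdge n) : edgeInFace e (faceB e) := by
  by_cases h : e.1.2 - 1 ∈ e.1.1
  · right; right; left
    show e.1 = _
    rw [faceB_pos _ h]
    simp [Finset.insert_erase h, sub_add_cancel]
  · right; left
    show e.1 = _
    rw [faceB_neg _ h]
    simp [sub_add_cancel]

lemma face_classify (e : CubeEdge n) (f : CubeFace n) (h : edgeInFace e f) :
    f = faceA e ∨ f = faceB e := by
  obtain ⟨⟨S, k⟩, hk⟩ := e
  obtain ⟨⟨T, i⟩, hi, hi1⟩ := f
  rcases h with h | h | h | h <;>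
    simp only [Prod.mk.injEq] at h <;> obtain ⟨h1, h2⟩ := h
  · left; subst h1; subst h2
    apply Subtype.ext
    show _ = (faceA _).1
    rw [faceA_neg (⟨(S, k), hk⟩ : CubeEdge n) hi1]
  · right; subst h1
    have hik : i = k - 1 := by rw [h2]; ring
    subst hik
    apply Subtype.ext
    show _ = (faceB _).1
    rw [faceB_neg (⟨(S, k), hk⟩ : CubeEdge n) hi]
  · right
    have hik : i = k - 1 := by rw [h2]; ring
    subst hik
    have hmem : k - 1 ∈ S := by rw [h1]; exact Finset.mem_insert_self _ _
    apply Subtype.ext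
    show _ = (faceB _).1
    rw [faceB_pos (⟨(S, k), hk⟩ : CubeEdge n) hmem]
    simp [h1, Finset.erase_insert hi]
  · left; subst h2
    have hmem : k + 1 ∈ S := by rw [h1]; exact Finset.mem_insert_self _ _
    apply Subtype.ext
    show _ = (faceA _).1
    rw [faceA_pos (⟨(S, k), hk⟩ : CubeEdge n) hmem]
    simp [h1, Finset.erase_insert hi1]

/-! ### Orientation -/

/-- The coherent orientation: a square is positively oriented iff its base set has
even cardinality. -/
def orFace (f : CubeFace n) : Bool := decide (Even f.1.1.card)

lemma memA_out (e : CubeEdge n) (h : e.1.2 + 1 ∉ e.1.1) :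
    (e.1.1, insert e.1.2 e.1.1) ∈ orientedBoundary (faceA e) true ∧
    (insert e.1.2 e.1.1, e.1.1) ∈ orientedBoundary (faceA e) false := by
  rw [faceA_neg _ h]
  constructor
  · simp only [orientedBoundary]; rw [if_pos trivial]; simp
  · simp only [orientedBoundary]; rw [if_neg (by simp)]; simp

lemma memA_in (e : CubeEdge n) (h : e.1.2 + 1 ∈ e.1.1) :
    (insert e.1.2 e.1.1, e.1.1) ∈ orientedBoundary (faceA e) true ∧
    (e.1.1, insert e.1.2 e.1.1) ∈ orientedBoundary (faceA e) false := by
  rw [faceA_pos _ h]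
  have h1 : insert (e.1.2 + 1) (e.1.1.erase (e.1.2 + 1)) = e.1.1 := Finset.insert_erase h
  have h2 : insert (e.1.2 + 1) (insert e.1.2 (e.1.1.erase (e.1.2 + 1))) = insert e.1.2 e.1.1 := by
    rw [Finset.insert_comm, h1]
  constructor
  · simp only [orientedBoundary]; rw [if_pos trivial]
    simp only [h1, h2, List.mem_cons]; tauto
  · simp only [orientedBoundary]; rw [if_neg (by simp)]
    simp only [h1, h2, List.mem_cons]; tauto

lemma memB_in (e : CubeEdge n) (h : e.1.2 - 1 ∈ e.1.1) :
    (e.1.1, insert e.1.2 e.1.1) ∈ orientedBoundary (faceB e) true ∧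
    (insert e.1.2 e.1.1, e.1.1) ∈ orientedBoundary (faceB e) false := by
  rw [faceB_pos _ h]
  have h1 : insert (e.1.2 - 1) (e.1.1.erase (e.1.2 - 1)) = e.1.1 := Finset.insert_erase h
  have h3 : e.1.2 - 1 + 1 = e.1.2 := sub_add_cancel _ _
  constructor
  · simp only [orientedBoundary]; rw [if_pos trivial]
    simp only [h3, h1, List.mem_cons]; tauto
  · simp only [orientedBoundary]; rw [if_neg (by simp)]
    simp only [h3, h1, List.mem_cons]; tauto

lemma memB_out (e : CubeEdge n) (h : e.1.2 - 1 ∉ e.1.1) :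
    (insert e.1.2 e.1.1, e.1.1) ∈ orientedBoundary (faceB e) true ∧
    (e.1.1, insert e.1.2 e.1.1) ∈ orientedBoundary (faceB e) false := by
  rw [faceB_neg _ h]
  have h3 : e.1.2 - 1 + 1 = e.1.2 := sub_add_cancel _ _
  constructor
  · simp only [orientedBoundary]; rw [if_pos trivial]
    simp only [h3, List.mem_cons]; tauto
  · simp only [orientedBoundary]; rw [if_neg (by simp)]
    simp only [h3, List.mem_cons]; tauto

lemma orFaceA_out (e : CubeEdge n) (h : e.1.2 + 1 ∉ e.1.1) :
    orFace (faceA e) = decide (Even e.1.1.card) := by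
  rw [faceA_neg _ h]; rfl

lemma orFaceA_in (e : CubeEdge n) (h : e.1.2 + 1 ∈ e.1.1) :
    orFace (faceA e) = !decide (Even e.1.1.card) := by
  rw [faceA_pos _ h]
  show decide (Even (e.1.1.erase (e.1.2 + 1)).card) = _
  rw [← Finset.card_erase_add_one h]
  simp [Nat.even_add_one, ← Nat.not_even_iff_odd]

lemma orFaceB_out (e : CubeEdge n) (h : e.1.2 - 1 ∉ e.1.1) :
    orFace (faceB e) = decide (Even e.1.1.card) := by
  rw [faceB_neg _ h]; rfl

lemma orFaceB_in (e : CubeEdge n) (h : e.1.2 - 1 ∈ e.1.1) :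
    orFace (faceB e) = !decide (Even e.1.1.card) := by
  rw [faceB_pos _ h]
  show decide (Even (e.1.1.erase (e.1.2 - 1)).card) = _
  rw [← Finset.card_erase_add_one h]
  simp [Nat.even_add_one, ← Nat.not_even_iff_odd]

lemma orient_main (e : CubeEdge n) :
    ((e.1.1, insert e.1.2 e.1.1) ∈ orientedBoundary (faceA e) (orFace (faceA e)) ∧
     (insert e.1.2 e.1.1, e.1.1) ∈ orientedBoundary (faceB e) (orFace (faceB e))) ∨
    ((insert e.1.2 e.1.1, e.1.1) ∈ orientedBoundary (faceA e) (orFace (faceA e)) ∧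
     (e.1.1, insert e.1.2 e.1.1) ∈ orientedBoundary (faceB e) (orFace (faceB e))) := by
  by_cases hp : e.1.2 + 1 ∈ e.1.1 <;> by_cases hm : e.1.2 - 1 ∈ e.1.1 <;>
    by_cases hb : Even e.1.1.card
  · rw [orFaceA_in e hp, orFaceB_in e hm, decide_eq_true hb, Bool.not_true]
    exact Or.inl ⟨(memA_in e hp).2, (memB_in e hm).2⟩
  · rw [orFaceA_in e hp, orFaceB_in e hm, decide_eq_false hb, Bool.not_false]
    exact Or.inr ⟨(memA_in e hp).1, (memB_in e hm).1⟩
  · rw [orFaceA_in e hp, orFaceB_out e hm, decide_eq_true hb, Bool.not_true]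
    exact Or.inl ⟨(memA_in e hp).2, (memB_out e hm).1⟩
  · rw [orFaceA_in e hp, orFaceB_out e hm, decide_eq_false hb, Bool.not_false]
    exact Or.inr ⟨(memA_in e hp).1, (memB_out e hm).2⟩
  · rw [orFaceA_out e hp, orFaceB_in e hm, decide_eq_true hb, Bool.not_true]
    exact Or.inl ⟨(memA_out e hp).1, (memB_in e hm).2⟩
  · rw [orFaceA_out e hp, orFaceB_in e hm, decide_eq_false hb, Bool.not_false]
    exact Or.inr ⟨(memA_out e hp).2, (memB_in e hm).1⟩
  · rw [orFaceA_out e hp, orFaceB_out e hm, decide_eq_true hb]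
    exact Or.inl ⟨(memA_out e hp).1, (memB_out e hm).1⟩
  · rw [orFaceA_out e hp, orFaceB_out e hm, decide_eq_false hb]
    exact Or.inr ⟨(memA_out e hp).2, (memB_out e hm).2⟩

/-! ### Links -/

lemma corner_face (h1 : (1 : ZMod n) ≠ 0) (S : Finset (ZMod n)) (k : ZMod n) :
    ∃ f : CubeFace n, isCorner S f ∧ f.1.2 = k := by
  have hne : k + 1 ≠ k := by
    intro h; exact h1 (by linear_combination h)
  refine ⟨⟨((S.erase k).erase (k + 1), k),
    fun hk => Finset.notMem_erase k S (Finset.mem_of_mem_erase hk),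
    Finset.notMem_erase _ _⟩, ?_, rfl⟩
  by_cases hk : k ∈ S <;> by_cases hk1 : k + 1 ∈ S
  · right; right; right
    show S = insert k (insert (k + 1) _)
    rw [Finset.insert_erase (Finset.mem_erase.mpr ⟨hne, hk1⟩), Finset.insert_erase hk]
  · right; left
    show S = insert k ((S.erase k).erase (k + 1))
    rw [Finset.erase_eq_of_notMem (fun h => hk1 (Finset.mem_of_mem_erase h)),
      Finset.insert_erase hk]
  · right; right; left
    show S = insert (k + 1) ((S.erase k).erase (k + 1))
    rw [Finset.erase_eq_of_notMem hk, Finset.insert_erase hk1]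
  · left
    show S = (S.erase k).erase (k + 1)
    rw [Finset.erase_eq_of_notMem hk, Finset.erase_eq_of_notMem hk1]

lemma linkAdj_succ (h1 : (1 : ZMod n) ≠ 0) (S : Finset (ZMod n)) (k : ZMod n) :
    linkAdj S k (k + 1) := by
  obtain ⟨f, hc, hf⟩ := corner_face h1 S k
  exact ⟨f, hc, Or.inl ⟨hf.symm, by rw [hf]⟩⟩

lemma linkAdj_pred (h1 : (1 : ZMod n) ≠ 0) (S : Finset (ZMod n)) (k : ZMod n) :
    linkAdj S k (k - 1) := by
  obtain ⟨f, hc, hf⟩ := corner_face h1 S (k - 1)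
  exact ⟨f, hc, Or.inr ⟨hf.symm, by rw [hf, sub_add_cancel]⟩⟩

lemma linkAdj_cases {S : Finset (ZMod n)} {k c : ZMod n} (h : linkAdj S k c) :
    c = k + 1 ∨ c = k - 1 := by
  obtain ⟨f, -, h | h⟩ := h
  · left; rw [h.2, h.1]
  · right; rw [h.1, h.2]; ring

lemma link_conn [NeZero n] (h1 : (1 : ZMod n) ≠ 0) (S : Finset (ZMod n)) (k k' : ZMod n) :
    Relation.ReflTransGen (linkAdj S) k k' := by
  have step : ∀ m : ℕ, Relation.ReflTransGen (linkAdj S) k (k + m) := by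
    intro m
    induction m with
    | zero => simpa using Relation.ReflTransGen.refl
    | succ m ih =>
      push_cast
      rw [← add_assoc]
      exact ih.tail (linkAdj_succ h1 S _)
  have := step (k' - k).val
  rwa [ZMod.natCast_rightInverse _, add_sub_cancel] at this

/-! ### Connectivity of the vertex set -/

lemma vertex_conn (A B : Finset (ZMod n)) :
    Relation.ReflTransGen cubeVertexAdj A B := by
  have toE : ∀ C : Finset (ZMod n), Relation.ReflTransGen cubeVertexAdj C ∅ := by
    intro C
    induction C using Finset.induction_on with
    | empty => exact .refl
    | @insert a s ha ih => exact .head ⟨a, Or.inr ⟨ha, rfl⟩⟩ ih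
  have hsymm : Symmetric (cubeVertexAdj (n := n)) := fun X Y ⟨k, h⟩ => ⟨k, h.symm⟩
  exact (toE A).trans (haveI : Std.Symm (cubeVertexAdj (n := n)) := ⟨fun _ _ h => hsymm h⟩; Std.Symm.symm _ _ (toE B))

/-! ### Counting -/

lemma card_one [NeZero n] (a : ZMod n) :
    Fintype.card {S : Finset (ZMod n) // a ∉ S} = 2 ^ (n - 1) := by
  rw [Fintype.card_subtype]
  have : (Finset.univ.filter fun S : Finset (ZMod n) => a ∉ S)
      = (Finset.univ.erase a).powerset := by
    ext S
    simp [Finset.subset_erase, Finset.subset_univ]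
  rw [this, Finset.card_powerset, Finset.card_erase_of_mem (Finset.mem_univ a),
    Finset.card_univ, ZMod.card]

lemma card_two [NeZero n] (h1 : (1 : ZMod n) ≠ 0) (a : ZMod n) :
    Fintype.card {S : Finset (ZMod n) // a ∉ S ∧ a + 1 ∉ S} = 2 ^ (n - 2) := by
  rw [Fintype.card_subtype]
  have : (Finset.univ.filter fun S : Finset (ZMod n) => a ∉ S ∧ a + 1 ∉ S)
      = ((Finset.univ.erase a).erase (a + 1)).powerset := by
    ext S
    simp only [Finset.mem_filter, Finset.mem_univ, true_and, Finset.mem_powerset,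
      Finset.subset_erase, Finset.subset_univ, true_and]
  have hmem : a + 1 ∈ Finset.univ.erase a := by
    refine Finset.mem_erase.mpr ⟨?_, Finset.mem_univ _⟩
    intro h; exact h1 (by linear_combination h)
  rw [this, Finset.card_powerset, Finset.card_erase_of_mem hmem,
    Finset.card_erase_of_mem (Finset.mem_univ a), Finset.card_univ, ZMod.card]
  congr 1

def edgeEquiv (n : ℕ) : CubeEdge n ≃ Σ k : ZMod n, {S : Finset (ZMod n) // k ∉ S} where
  toFun e := ⟨e.1.2, e.1.1, e.2⟩
  invFun x := ⟨(x.2.1, x.1), x.2.2⟩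
  left_inv e := rfl
  right_inv x := rfl

def faceEquiv (n : ℕ) : CubeFace n ≃ Σ i : ZMod n, {S : Finset (ZMod n) // i ∉ S ∧ i + 1 ∉ S} where
  toFun f := ⟨f.1.2, f.1.1, f.2⟩
  invFun x := ⟨(x.2.1, x.1), x.2.2⟩
  left_inv f := rfl
  right_inv x := rfl

lemma card_edge [NeZero n] : Fintype.card (CubeEdge n) = n * 2 ^ (n - 1) := by
  rw [Fintype.card_congr (edgeEquiv n), Fintype.card_sigma]
  simp only [card_one]
  rw [Finset.sum_const, Finset.card_univ, ZMod.card, smul_eq_mul]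

lemma card_face [NeZero n] (h1 : (1 : ZMod n) ≠ 0) :
    Fintype.card (CubeFace n) = n * 2 ^ (n - 2) := by
  rw [Fintype.card_congr (faceEquiv n), Fintype.card_sigma]
  simp only [card_two h1]
  rw [Finset.sum_const, Finset.card_univ, ZMod.card, smul_eq_mul]

end Stmt19Aux

open Stmt19Aux in
/-- The complex `Y` associated with the `n`-cycle (`n ≥ 5`) — the subcomplex of the
`n`-cube on square faces in cyclically adjacent coordinate directions — is a closed
connected orientable surface (every edge lies in exactly two squares, the link of every
vertex is a single cycle, and the squares can be coherently oriented) with Euler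
characteristic `(4 − n)·2^(n−2)`, hence of genus `1 + (n − 4)·2^(n−3)`. -/
theorem stmt19 (n : ℕ) [NeZero n] (hn : 5 ≤ n) :
    (∀ e : CubeEdge n, ∃ f₁ f₂ : CubeFace n, f₁ ≠ f₂ ∧ edgeInFace e f₁ ∧ edgeInFace e f₂ ∧
      ∀ f : CubeFace n, edgeInFace e f → f = f₁ ∨ f = f₂) ∧
    (∀ S : Finset (ZMod n),
      (∀ k k' : ZMod n, Relation.ReflTransGen (linkAdj S) k k') ∧
      (∀ k : ZMod n, ∃ a b : ZMod n, a ≠ b ∧ linkAdj S k a ∧ linkAdj S k b ∧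
        ∀ c : ZMod n, linkAdj S k c → c = a ∨ c = b)) ∧
    (∀ A B : Finset (ZMod n), Relation.ReflTransGen cubeVertexAdj A B) ∧
    (∃ or : CubeFace n → Bool, ∀ (e : CubeEdge n) (f₁ f₂ : CubeFace n), f₁ ≠ f₂ →
      edgeInFace e f₁ → edgeInFace e f₂ →
        (((e.1.1, insert e.1.2 e.1.1) ∈ orientedBoundary f₁ (or f₁) ∧
          (insert e.1.2 e.1.1, e.1.1) ∈ orientedBoundary f₂ (or f₂)) ∨
         ((insert e.1.2 e.1.1, e.1.1) ∈ orientedBoundary f₁ (or f₁) ∧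
          (e.1.1, insert e.1.2 e.1.1) ∈ orientedBoundary f₂ (or f₂)))) ∧
    ((Fintype.card (Finset (ZMod n)) : ℤ) - Fintype.card (CubeEdge n) +
        Fintype.card (CubeFace n) = (4 - (n : ℤ)) * 2 ^ (n - 2)) ∧
    (∃ g : ℕ, (g : ℤ) = 1 + ((n : ℤ) - 4) * 2 ^ (n - 3) ∧
      (Fintype.card (Finset (ZMod n)) : ℤ) - Fintype.card (CubeEdge n) +
        Fintype.card (CubeFace n) = 2 - 2 * (g : ℤ)) := by
  have h1 : (1 : ZMod n) ≠ 0 := by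
    haveI : Fact (1 < n) := ⟨by omega⟩
    exact one_ne_zero
  have h2 : (2 : ZMod n) ≠ 0 := by
    intro h
    have hd : n ∣ 2 := (ZMod.natCast_eq_zero_iff 2 n).mp (by exact_mod_cast h)
    have := Nat.le_of_dvd (by norm_num) hd
    omega
  refine ⟨?_, ?_, ?_, ?_, ?_, ?_⟩
  · intro e
    exact ⟨faceA e, faceB e, faceA_ne_faceB h1 e, edge_in_faceA e, edge_in_faceB e,
      fun f hf => face_classify e f hf⟩
  · intro S
    refine ⟨link_conn h1 S, fun k => ⟨k + 1, k - 1, ?_, linkAdj_succ h1 S k,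
      linkAdj_pred h1 S k, fun c hc => linkAdj_cases hc⟩⟩
    intro h
    exact h2 (by linear_combination h)
  · exact vertex_conn
  · refine ⟨orFace, fun e f₁ f₂ hne hf₁ hf₂ => ?_⟩
    rcases face_classify e f₁ hf₁ with rfl | rfl <;>
      rcases face_classify e f₂ hf₂ with rfl | rfl
    · exact absurd rfl hne
    · exact orient_main e
    · rcases orient_main e with ⟨ha, hb⟩ | ⟨ha, hb⟩
      · exact Or.inr ⟨hb, ha⟩
      · exact Or.inl ⟨hb, ha⟩
    · exact absurd rfl hne
  · rw [Fintype.card_finset, ZMod.card, card_edge, card_face h1]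
    obtain ⟨m, rfl⟩ : ∃ m, n = m + 5 := ⟨n - 5, by omega⟩
    simp only [show m + 5 - 1 = m + 4 by omega, show m + 5 - 2 = m + 3 by omega]
    push_cast
    ring
  · obtain ⟨m, rfl⟩ : ∃ m, n = m + 5 := ⟨n - 5, by omega⟩
    refine ⟨1 + (m + 1) * 2 ^ (m + 2), ?_, ?_⟩
    · simp only [show m + 5 - 3 = m + 2 by omega]
      push_cast
      ring
    · rw [Fintype.card_finset, ZMod.card, card_edge, card_face h1]
      simp only [show m + 5 - 1 = m + 4 by omega, show m + 5 - 2 = m + 3 by omega]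
      push_cast
      ring
end
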